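/- arXiv:1803.01336 — 4 statements merged into one kernel-verified Lean document; each statement's English description precedes it below -/
import Mathlib

section
/- Assume that Υ_k > 0 and Λ_k > 0 for k = 0,…,N+1. Then the process λ_{k−1} = Z_k x̂_{k|k} + X_k x̃_k (k = 0,…,N+1) is a solution of the forward–backward stochastic difference equations x_{k+1} = A x_k + B^L u_k^L + B^R u_k^R + ω_k, λ_{k−1} = E[A′λ_k | F_k] + Q x_k for k = 0,…,N, λ_N = P_{N+1} x_{N+1}, where the controls satisfy the stationarity conditions 0 = E[(B^L)′λ_k | F_k] + R^L u_k^L and 0 = E[(B^R)′λ_k | F{Y_k}] + R^R u_k^R. -/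
open MeasureTheory ProbabilityTheory Matrix Filter

noncomputable section

namespace NCS0

/-- System data for the networked control system: plant matrices `A, B^L, B^R`,
weight matrices `Q, R^L, R^R` and packet-dropout probability `p`. -/
structure Sys (n mL mR : ℕ) where
  A : Matrix (Fin n) (Fin n) ℝ
  BL : Matrix (Fin n) (Fin mL) ℝ
  BR : Matrix (Fin n) (Fin mR) ℝ
  Q : Matrix (Fin n) (Fin n) ℝ
  RL : Matrix (Fin mL) (Fin mL) ℝ
  RR : Matrix (Fin mR) (Fin mR) ℝ
  p : ℝ

namespace Sys

variable {n mL mR : ℕ} (S : Sys n mL mR)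

/-- The stacked input matrix `[B^L  B^R]`. -/
def Bc : Matrix (Fin n) (Fin mL ⊕ Fin mR) ℝ := fromCols S.BL S.BR

/-- The stacked weight `diag(R^L, R^R)`. -/
def Rc : Matrix (Fin mL ⊕ Fin mR) (Fin mL ⊕ Fin mR) ℝ := fromBlocks S.RL 0 0 S.RR

/-- `Υ = [B^L B^R]′ Z [B^L B^R] + diag(R^L, R^R)`. -/
def Ups (Z : Matrix (Fin n) (Fin n) ℝ) : Matrix (Fin mL ⊕ Fin mR) (Fin mL ⊕ Fin mR) ℝ :=
  S.Bcᵀ * Z * S.Bc + S.Rc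

/-- `K = Υ⁻¹ [B^L B^R]′ Z A`. -/
def Kg (Z : Matrix (Fin n) (Fin n) ℝ) : Matrix (Fin mL ⊕ Fin mR) (Fin n) ℝ :=
  (S.Ups Z)⁻¹ * (S.Bcᵀ * Z * S.A)

/-- `Ψ = (1 − p) Z + p X`. -/
def Psi (Z X : Matrix (Fin n) (Fin n) ℝ) : Matrix (Fin n) (Fin n) ℝ :=
  (1 - S.p) • Z + S.p • X

/-- `Λ = (B^L)′ Ψ B^L + R^L`. -/
def Lam (Ψ : Matrix (Fin n) (Fin n) ℝ) : Matrix (Fin mL) (Fin mL) ℝ :=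
  S.BLᵀ * Ψ * S.BL + S.RL

/-- `M = (B^L)′ Ψ A`. -/
def Mg (Ψ : Matrix (Fin n) (Fin n) ℝ) : Matrix (Fin mL) (Fin n) ℝ :=
  S.BLᵀ * Ψ * S.A

/-- One backward step of the `Z`-Riccati recursion: `A′ZA + Q − K′ΥK`. -/
def Zstep (Z : Matrix (Fin n) (Fin n) ℝ) : Matrix (Fin n) (Fin n) ℝ :=
  S.Aᵀ * Z * S.A + S.Q - (S.Kg Z)ᵀ * S.Ups Z * S.Kg Z

/-- One backward step of the `X`-Riccati recursion: `A′ΨA + Q − M′Λ⁻¹M`. -/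
def Xstep (Ψ : Matrix (Fin n) (Fin n) ℝ) : Matrix (Fin n) (Fin n) ℝ :=
  S.Aᵀ * Ψ * S.A + S.Q - (S.Mg Ψ)ᵀ * (S.Lam Ψ)⁻¹ * S.Mg Ψ

/-- The coupled Riccati recursion in "steps-to-go" form with terminal value `P`:
`ZX P j` is the pair `(Z_k(N), X_k(N))` when `j = N + 1 − k` (terminal values
`Z_{N+1} = X_{N+1} = P`). -/
def ZX (P : Matrix (Fin n) (Fin n) ℝ) : ℕ → Matrix (Fin n) (Fin n) ℝ × Matrix (Fin n) (Fin n) ℝ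
  | 0 => (P, P)
  | j + 1 =>
      (S.Zstep (ZX P j).1, S.Xstep (S.Psi (ZX P j).1 (ZX P j).2))

end Sys

variable {Ω : Type*} [MeasurableSpace Ω]

/-- The remote-controller information σ-algebra `F{Y_k} = σ(y_0, …, y_k)`, where the
channel output `y_j` is modelled by the pair `(η_j, η_j · x_j)` (when `η_j = 1` the
receiver sees `x_j`, when `η_j = 0` it sees nothing). -/
def GY {n : ℕ} (η : ℕ → Ω → ℝ) (x : ℕ → Ω → Fin n → ℝ) (k : ℕ) : MeasurableSpace Ω :=
  ⨆ j ∈ Set.Iic k,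
    (MeasurableSpace.comap (η j) inferInstance ⊔
      MeasurableSpace.comap (fun ω => η j ω • x j ω) inferInstance)

/-- The local-controller information σ-algebra
`F_k = σ(x_0, ω_0, …, ω_{k−1}, y_0, …, y_k)`. -/
def Fk {n : ℕ} (x0 : Ω → Fin n → ℝ) (w : ℕ → Ω → Fin n → ℝ)
    (η : ℕ → Ω → ℝ) (x : ℕ → Ω → Fin n → ℝ) (k : ℕ) : MeasurableSpace Ω :=
  MeasurableSpace.comap x0 inferInstance ⊔
    (⨆ j ∈ Set.Iio k, MeasurableSpace.comap (w j) inferInstance) ⊔ GY η x k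

/-- The family of σ-algebras generated by `x_0`, the noises `ω_k` and the channel
variables `η_k`, used to express their mutual independence. -/
def infoAlg {n : ℕ} (x0 : Ω → Fin n → ℝ) (w : ℕ → Ω → Fin n → ℝ)
    (η : ℕ → Ω → ℝ) : Option (ℕ ⊕ ℕ) → MeasurableSpace Ω :=
  fun i =>
    Option.elim i (MeasurableSpace.comap x0 inferInstance)
      (Sum.elim (fun k => MeasurableSpace.comap (w k) inferInstance)
        (fun k => MeasurableSpace.comap (η k) inferInstance))

section MyAux

lemma indep_mono {Ω' : Type*} {mA : MeasurableSpace Ω'} {μ : Measure Ω'}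
    {m₁ m₂ m₁' m₂' : MeasurableSpace Ω'} (h : Indep m₁ m₂ μ)
    (h1 : m₁' ≤ m₁) (h2 : m₂' ≤ m₂) : Indep m₁' m₂' μ := by
  rw [Indep_iff] at h ⊢
  exact fun t1 t2 ht1 ht2 => h t1 t2 (h1 _ ht1) (h2 _ ht2)

lemma pi_integral_apply {Ω' : Type*} {mA : MeasurableSpace Ω'} {μ : Measure Ω'}
    {a : ℕ} {f : Ω' → Fin a → ℝ} (hf : Integrable f μ) (i : Fin a) :
    (∫ ω, f ω ∂μ) i = ∫ ω, f ω i ∂μ := by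
  have h := (ContinuousLinearMap.proj (R := ℝ) (φ := fun _ : Fin a => ℝ) i).integral_comp_comm hf
  simpa using h.symm

lemma integrable_mulVec {Ω' : Type*} {mA : MeasurableSpace Ω'} {μ : Measure Ω'}
    {a b : ℕ} (M : Matrix (Fin b) (Fin a) ℝ) {f : Ω' → Fin a → ℝ}
    (hf : Integrable f μ) : Integrable (fun ω => M *ᵥ f ω) μ := by
  simpa using (LinearMap.toContinuousLinearMap M.mulVecLin).integrable_comp hf

lemma integrable_apply_of_integrable {Ω' : Type*} {mA : MeasurableSpace Ω'} {μ : Measure Ω'}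
    {a : ℕ} {f : Ω' → Fin a → ℝ} (hf : Integrable f μ)
    (i : Fin a) : Integrable (fun ω => f ω i) μ := by
  simpa using (ContinuousLinearMap.proj (R := ℝ) (φ := fun _ : Fin a => ℝ) i).integrable_comp hf

lemma condexp_clm {Ω' : Type*} {m m0 : MeasurableSpace Ω'} {μ : Measure Ω'}
    [IsProbabilityMeasure μ] (hm : m ≤ m0) {a b : ℕ}
    (T : (Fin a → ℝ) →L[ℝ] (Fin b → ℝ)) {f : Ω' → Fin a → ℝ} (hf : Integrable f μ) :
    μ[fun ω => T (f ω)|m] =ᵐ[μ] fun ω => T ((μ[f|m]) ω) := by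
  refine (ae_eq_condExp_of_forall_setIntegral_eq hm (T.integrable_comp hf)
    (fun s _ _ => (T.integrable_comp integrable_condExp).integrableOn)
    (fun s hs _ => ?_)
    ((T.continuous.comp_stronglyMeasurable stronglyMeasurable_condExp).aestronglyMeasurable)).symm
  rw [T.integral_comp_comm integrable_condExp.integrableOn,
    T.integral_comp_comm hf.integrableOn, setIntegral_condExp hm hf hs]

lemma condexp_mulVec {Ω' : Type*} {m m0 : MeasurableSpace Ω'} {μ : Measure Ω'}
    [IsProbabilityMeasure μ] (hm : m ≤ m0) {a b : ℕ}
    (M : Matrix (Fin b) (Fin a) ℝ) {f : Ω' → Fin a → ℝ} (hf : Integrable f μ) :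
    μ[fun ω => M *ᵥ f ω|m] =ᵐ[μ] fun ω => M *ᵥ (μ[f|m]) ω := by
  simpa using condexp_clm hm (LinearMap.toContinuousLinearMap M.mulVecLin) hf

lemma condexp_of_indep_zero {Ω' : Type*} {m mW m0 : MeasurableSpace Ω'} {μ : Measure Ω'}
    [IsProbabilityMeasure μ] (hm : m ≤ m0) (hmW : mW ≤ m0)
    {a : ℕ} {f : Ω' → Fin a → ℝ} (hf : StronglyMeasurable[mW] f) (hindep : Indep mW m μ)
    (hmean : ∫ ω, f ω ∂μ = 0) : μ[f|m] =ᵐ[μ] 0 := by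
  have h := condExp_indep_eq (μ := μ) hmW hm hf hindep
  rw [hmean] at h
  exact h

lemma condexp_indep_smul {Ω' : Type*} {m mG m0 : MeasurableSpace Ω'} {μ : Measure Ω'}
    [IsProbabilityMeasure μ] (hm : m ≤ m0) (hmmG : m ≤ mG)
    {a : ℕ} {ξ : Ω' → ℝ} {v : Ω' → Fin a → ℝ}
    (hξ : Measurable[m0] ξ)
    (hindep : Indep (MeasurableSpace.comap ξ inferInstance) mG μ)
    (hξbdd : ∀ ω, |ξ ω| ≤ 1)
    (hv : Measurable[mG] v) (hvint : Integrable v μ) :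
    μ[fun ω => ξ ω • v ω|m] =ᵐ[μ] fun ω => (∫ ω', ξ ω' ∂μ) • (μ[v|m]) ω := by
  have hξmem : MemLp ξ ⊤ μ :=
    memLp_top_of_bound hξ.aestronglyMeasurable 1
      (Filter.Eventually.of_forall fun ω => by simpa [Real.norm_eq_abs] using hξbdd ω)
  have hξint : Integrable ξ μ := hξmem.integrable le_top
  have hint : Integrable (fun ω => ξ ω • v ω) μ := hvint.smul_of_top_right hξmem
  refine (ae_eq_condExp_of_forall_setIntegral_eq hm hint
    (fun s _ _ => (Integrable.smul (∫ ω', ξ ω' ∂μ) integrable_condExp).integrableOn)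
    (fun s hs _ => ?_)
    ((stronglyMeasurable_condExp.const_smul (∫ ω', ξ ω' ∂μ)).aestronglyMeasurable)).symm
  have hsm0 : MeasurableSet s := hm s hs
  have h1 : ∫ ω in s, (∫ ω', ξ ω' ∂μ) • (μ[v|m]) ω ∂μ
      = (∫ ω', ξ ω' ∂μ) • ∫ ω in s, (μ[v|m]) ω ∂μ := integral_smul _ _
  simp only [Pi.smul_apply]
  rw [h1, setIntegral_condExp hm hvint hs]
  funext i
  have hvi : Integrable (fun ω => v ω i) μ := integrable_apply_of_integrable hvint i
  have hindi : Integrable (s.indicator fun ω' => v ω' i) μ := hvi.indicator hsm0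
  have hIF : IndepFun ξ (s.indicator fun ω' => v ω' i) μ := by
    rw [IndepFun_iff_Indep]
    exact indep_mono hindep le_rfl
      (Measurable.comap_le (((measurable_pi_apply i).comp hv).indicator (hmmG s hs)))
  have e4 : ∫ ω, ξ ω * (s.indicator fun ω' => v ω' i) ω ∂μ
      = (∫ ω, ξ ω ∂μ) * ∫ ω, (s.indicator fun ω' => v ω' i) ω ∂μ :=
    hIF.integral_fun_mul_eq_mul_integral hξint.aestronglyMeasurable hindi.aestronglyMeasurable
  calc ((∫ ω', ξ ω' ∂μ) • ∫ ω in s, v ω ∂μ) i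
      = (∫ ω', ξ ω' ∂μ) * ∫ ω in s, v ω i ∂μ := by
        rw [Pi.smul_apply, pi_integral_apply hvint.integrableOn i, smul_eq_mul]
    _ = (∫ ω', ξ ω' ∂μ) * ∫ ω, (s.indicator fun ω' => v ω' i) ω ∂μ := by
        rw [integral_indicator hsm0]
    _ = ∫ ω, ξ ω * (s.indicator fun ω' => v ω' i) ω ∂μ := e4.symm
    _ = ∫ ω in s, ξ ω * v ω i ∂μ := by
        rw [← integral_indicator hsm0]
        congr 1
        funext ω
        by_cases hω : ω ∈ s <;> simp [Set.indicator_apply, hω]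
    _ = (∫ ω in s, ξ ω • v ω ∂μ) i := by
        rw [pi_integral_apply hint.integrableOn i]
        simp

end MyAux

lemma condexp_add3 {Ω' : Type*} {m m0 : MeasurableSpace Ω'} {μ : Measure Ω'}
    [IsProbabilityMeasure μ] {a : ℕ} {f g h : Ω' → Fin a → ℝ}
    (hf : Integrable f μ) (hg : Integrable g μ) (hh : Integrable h μ) :
    μ[fun ω => f ω + g ω + h ω|m] =ᵐ[μ] fun ω => (μ[f|m]) ω + (μ[g|m]) ω + (μ[h|m]) ω := by
  have h1 := condExp_add (μ := μ) (m := m) (hf.add hg) hh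
  have h2 := condExp_add (μ := μ) (m := m) hf hg
  refine h1.trans ?_
  filter_upwards [h2] with ω hω
  simp only [Pi.add_apply] at hω ⊢
  rw [hω]

section SigmaAlgAux

variable {Ω' : Type*}

/-- All information generated by `x0`, `w_0,…,w_{k−1}`, `η_0,…,η_k`. -/
def Hk {n : ℕ} (x0 : Ω' → Fin n → ℝ) (w : ℕ → Ω' → Fin n → ℝ) (η : ℕ → Ω' → ℝ)
    (k : ℕ) : MeasurableSpace Ω' :=
  MeasurableSpace.comap x0 inferInstance ⊔
    (⨆ j ∈ Set.Iio k, MeasurableSpace.comap (w j) inferInstance) ⊔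
    (⨆ j ∈ Set.Iic k, MeasurableSpace.comap (η j) inferInstance)

variable {n : ℕ} {x0 : Ω' → Fin n → ℝ} {w : ℕ → Ω' → Fin n → ℝ} {η : ℕ → Ω' → ℝ}
  {x : ℕ → Ω' → Fin n → ℝ}

lemma Hk_mono {a b : ℕ} (hab : a ≤ b) : Hk x0 w η a ≤ Hk x0 w η b := by
  refine sup_le_sup (sup_le_sup le_rfl ?_) ?_
  · exact biSup_mono fun j hj => Set.mem_Iio.mpr (lt_of_lt_of_le (Set.mem_Iio.mp hj) hab)
  · exact biSup_mono fun j hj => Set.mem_Iic.mpr (le_trans (Set.mem_Iic.mp hj) hab)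

lemma GY_mono {a b : ℕ} (hab : a ≤ b) : GY η x a ≤ GY η x b :=
  biSup_mono fun j hj => Set.mem_Iic.mpr (le_trans (Set.mem_Iic.mp hj) hab)

lemma Fk_mono {a b : ℕ} (hab : a ≤ b) : Fk x0 w η x a ≤ Fk x0 w η x b := by
  refine sup_le_sup (sup_le_sup le_rfl ?_) (GY_mono hab)
  exact biSup_mono fun j hj => Set.mem_Iio.mpr (lt_of_lt_of_le (Set.mem_Iio.mp hj) hab)

lemma GY_le_Fk (k : ℕ) : GY η x k ≤ Fk x0 w η x k := le_sup_right

lemma comap_eta_le_Hk {j k : ℕ} (hjk : j ≤ k) :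
    MeasurableSpace.comap (η j) inferInstance ≤ Hk x0 w η k :=
  le_trans
    (le_iSup₂ (f := fun j (_ : j ∈ Set.Iic k) => MeasurableSpace.comap (η j) inferInstance)
      j (Set.mem_Iic.mpr hjk)) le_sup_right

lemma comap_w_le_Hk {j k : ℕ} (hjk : j < k) :
    MeasurableSpace.comap (w j) inferInstance ≤ Hk x0 w η k :=
  le_trans (le_trans
    (le_iSup₂ (f := fun j (_ : j ∈ Set.Iio k) => MeasurableSpace.comap (w j) inferInstance)
      j (Set.mem_Iio.mpr hjk)) le_sup_right) le_sup_left

lemma comap_x0_le_Hk {k : ℕ} :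
    MeasurableSpace.comap x0 inferInstance ≤ Hk x0 w η k :=
  le_trans le_sup_left le_sup_left

lemma comap_w_le_Fk {j k : ℕ} (hjk : j < k) :
    MeasurableSpace.comap (w j) inferInstance ≤ Fk x0 w η x k :=
  le_trans (le_trans
    (le_iSup₂ (f := fun j (_ : j ∈ Set.Iio k) => MeasurableSpace.comap (w j) inferInstance)
      j (Set.mem_Iio.mpr hjk)) le_sup_right) le_sup_left

lemma measurable_mulVec_comp {m : MeasurableSpace Ω'} {a b : ℕ}
    (M : Matrix (Fin b) (Fin a) ℝ) {f : Ω' → Fin a → ℝ} (hf : Measurable[m] f) :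
    Measurable[m] (fun ω => M *ᵥ f ω) := by
  have h := ((LinearMap.toContinuousLinearMap M.mulVecLin).continuous.measurable).comp hf
  exact h

lemma Hk_le_ambient {m0 : MeasurableSpace Ω'} (hmx0 : Measurable[m0] x0)
    (hmw : ∀ k, Measurable[m0] (w k)) (hmη : ∀ k, Measurable[m0] (η k)) (k : ℕ) :
    Hk x0 w η k ≤ m0 :=
  sup_le (sup_le hmx0.comap_le (iSup₂_le fun j _ => (hmw j).comap_le))
    (iSup₂_le fun j _ => (hmη j).comap_le)

lemma infoAlg_le {m0 : MeasurableSpace Ω'} (hmx0 : Measurable[m0] x0)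
    (hmw : ∀ k, Measurable[m0] (w k)) (hmη : ∀ k, Measurable[m0] (η k)) :
    ∀ i, infoAlg x0 w η i ≤ m0 := by
  rintro (_ | (j | j))
  · exact hmx0.comap_le
  · exact (hmw j).comap_le
  · exact (hmη j).comap_le

section StructMeas

variable {mL mR : ℕ} {S : Sys n mL mR} {uL : ℕ → Ω' → Fin mL → ℝ} {uR : ℕ → Ω' → Fin mR → ℝ}

lemma struct_meas
    (hx0eq : x 0 = x0)
    (hdyn : ∀ k ω, x (k + 1) ω = S.A *ᵥ x k ω + S.BL *ᵥ uL k ω + S.BR *ᵥ uR k ω + w k ω)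
    (huRmeas : ∀ k, StronglyMeasurable[GY η x k] (uR k))
    (huLmeas : ∀ k, StronglyMeasurable[Fk x0 w η x k] (uL k)) :
    ∀ k, Measurable[Hk x0 w η k] (x k) := by
  have heta : ∀ j k : ℕ, j ≤ k → Measurable[Hk x0 w η k] (η j) := fun j k hjk =>
    Measurable.of_comap_le (comap_eta_le_Hk hjk)
  have hGYle : ∀ m : ℕ, (∀ j, j ≤ m → Measurable[Hk x0 w η m] (x j)) →
      GY η x m ≤ Hk x0 w η m := by
    intro m hm
    refine iSup₂_le fun j hj => sup_le (comap_eta_le_Hk (Set.mem_Iic.mp hj)) ?_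
    exact Measurable.comap_le
      ((heta j m (Set.mem_Iic.mp hj)).smul (hm j (Set.mem_Iic.mp hj)))
  intro k
  induction k using Nat.strong_induction_on with
  | _ k ih =>
    match k with
    | 0 => exact hx0eq ▸ Measurable.of_comap_le comap_x0_le_Hk
    | Nat.succ k =>
      have hxj : ∀ j, j ≤ k → Measurable[Hk x0 w η k] (x j) := fun j hj =>
        (ih j (Nat.lt_succ_of_le hj)).mono (Hk_mono hj) le_rfl
      have hFle : Fk x0 w η x k ≤ Hk x0 w η k := by
        refine sup_le (sup_le comap_x0_le_Hk ?_) (hGYle k hxj)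
        exact iSup₂_le fun j hj => comap_w_le_Hk (Set.mem_Iio.mp hj)
      have hmono : Hk x0 w η k ≤ Hk x0 w η (k + 1) := Hk_mono (Nat.le_succ k)
      have hx : Measurable[Hk x0 w η (k + 1)] (x k) :=
        (ih k (Nat.lt_succ_self k)).mono hmono le_rfl
      have huL : Measurable[Hk x0 w η (k + 1)] (uL k) :=
        ((huLmeas k).measurable).mono (le_trans hFle hmono) le_rfl
      have huR : Measurable[Hk x0 w η (k + 1)] (uR k) :=
        ((huRmeas k).measurable).mono (le_trans (le_trans (hGYle k hxj) hmono) le_rfl) le_rfl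
      have hwk : Measurable[Hk x0 w η (k + 1)] (w k) :=
        Measurable.of_comap_le (comap_w_le_Hk (Nat.lt_succ_self k))
      have : Measurable[Hk x0 w η (k + 1)]
          (fun ω => S.A *ᵥ x k ω + S.BL *ᵥ uL k ω + S.BR *ᵥ uR k ω + w k ω) :=
        (((measurable_mulVec_comp S.A hx).add (measurable_mulVec_comp S.BL huL)).add
          (measurable_mulVec_comp S.BR huR)).add hwk
      exact (funext (hdyn k) : x (k + 1) = _) ▸ this

lemma GY_le_Hk
    (hx0eq : x 0 = x0)
    (hdyn : ∀ k ω, x (k + 1) ω = S.A *ᵥ x k ω + S.BL *ᵥ uL k ω + S.BR *ᵥ uR k ω + w k ω)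
    (huRmeas : ∀ k, StronglyMeasurable[GY η x k] (uR k))
    (huLmeas : ∀ k, StronglyMeasurable[Fk x0 w η x k] (uL k)) (k : ℕ) :
    GY η x k ≤ Hk x0 w η k := by
  have hmx := struct_meas hx0eq hdyn huRmeas huLmeas
  refine iSup₂_le fun j hj => sup_le (comap_eta_le_Hk (Set.mem_Iic.mp hj)) ?_
  refine Measurable.comap_le (Measurable.smul (f := η j) (g := x j) ?_ ?_)
  · exact Measurable.of_comap_le (comap_eta_le_Hk (Set.mem_Iic.mp hj))
  · exact (hmx j).mono (Hk_mono (Set.mem_Iic.mp hj)) le_rfl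

lemma Fk_le_Hk
    (hx0eq : x 0 = x0)
    (hdyn : ∀ k ω, x (k + 1) ω = S.A *ᵥ x k ω + S.BL *ᵥ uL k ω + S.BR *ᵥ uR k ω + w k ω)
    (huRmeas : ∀ k, StronglyMeasurable[GY η x k] (uR k))
    (huLmeas : ∀ k, StronglyMeasurable[Fk x0 w η x k] (uL k)) (k : ℕ) :
    Fk x0 w η x k ≤ Hk x0 w η k := by
  refine sup_le (sup_le comap_x0_le_Hk ?_) (GY_le_Hk hx0eq hdyn huRmeas huLmeas k)
  exact iSup₂_le fun j hj => comap_w_le_Hk (Set.mem_Iio.mp hj)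

lemma x_meas_Fk
    (hx0eq : x 0 = x0)
    (hdyn : ∀ k ω, x (k + 1) ω = S.A *ᵥ x k ω + S.BL *ᵥ uL k ω + S.BR *ᵥ uR k ω + w k ω)
    (huRmeas : ∀ k, StronglyMeasurable[GY η x k] (uR k))
    (huLmeas : ∀ k, StronglyMeasurable[Fk x0 w η x k] (uL k)) :
    ∀ k, Measurable[Fk x0 w η x k] (x k) := by
  intro k
  induction k with
  | zero => exact hx0eq ▸ Measurable.of_comap_le (le_trans le_sup_left le_sup_left)
  | succ k ih =>
    have hmono : Fk x0 w η x k ≤ Fk x0 w η x (k + 1) := Fk_mono (Nat.le_succ k)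
    have hx : Measurable[Fk x0 w η x (k + 1)] (x k) := ih.mono hmono le_rfl
    have huLm : Measurable[Fk x0 w η x (k + 1)] (uL k) :=
      (huLmeas k).measurable.mono hmono le_rfl
    have huRm : Measurable[Fk x0 w η x (k + 1)] (uR k) :=
      (huRmeas k).measurable.mono (le_trans (GY_le_Fk k) hmono) le_rfl
    have hwk : Measurable[Fk x0 w η x (k + 1)] (w k) :=
      Measurable.of_comap_le (comap_w_le_Fk (Nat.lt_succ_self k))
    have : Measurable[Fk x0 w η x (k + 1)]
        (fun ω => S.A *ᵥ x k ω + S.BL *ᵥ uL k ω + S.BR *ᵥ uR k ω + w k ω) :=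
      (((measurable_mulVec_comp S.A hx).add (measurable_mulVec_comp S.BL huLm)).add
        (measurable_mulVec_comp S.BR huRm)).add hwk
    exact (funext (hdyn k) : x (k + 1) = _) ▸ this

end StructMeas

lemma indep_w_Hk {m0 : MeasurableSpace Ω'} {μ : Measure Ω'} [IsProbabilityMeasure μ]
    (hmx0 : Measurable[m0] x0) (hmw : ∀ k, Measurable[m0] (w k))
    (hmη : ∀ k, Measurable[m0] (η k)) (hindep : iIndep (infoAlg x0 w η) μ) (k : ℕ) :
    Indep (MeasurableSpace.comap (w k) inferInstance) (Hk x0 w η k) μ := by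
  have h := indep_iSup_of_disjoint (infoAlg_le hmx0 hmw hmη) hindep
    (S := {Option.some (Sum.inl k)}) (T := {Option.some (Sum.inl k)}ᶜ) disjoint_compl_right
  have hle : ∀ (i : Option (ℕ ⊕ ℕ)) (U : Set (Option (ℕ ⊕ ℕ))), i ∈ U →
      infoAlg x0 w η i ≤ ⨆ i ∈ U, infoAlg x0 w η i := fun i U hi =>
    le_iSup₂ (f := fun i (_ : i ∈ U) => infoAlg x0 w η i) i hi
  refine indep_mono h ?_ ?_
  · exact hle (Option.some (Sum.inl k)) _ rfl
  · refine sup_le (sup_le ?_ ?_) ?_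
    · exact hle none _ (by simp)
    · refine iSup₂_le fun j hj => hle (Option.some (Sum.inl j)) _ ?_
      intro hc
      simp only [Set.mem_singleton_iff, Option.some.injEq, Sum.inl.injEq] at hc
      exact absurd hc (Set.mem_Iio.mp hj).ne
    · refine iSup₂_le fun j _ => hle (Option.some (Sum.inr j)) _ ?_
      intro hc
      simp at hc

lemma indep_eta_HkW {m0 : MeasurableSpace Ω'} {μ : Measure Ω'} [IsProbabilityMeasure μ]
    (hmx0 : Measurable[m0] x0) (hmw : ∀ k, Measurable[m0] (w k))
    (hmη : ∀ k, Measurable[m0] (η k)) (hindep : iIndep (infoAlg x0 w η) μ) (k : ℕ) :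
    Indep (MeasurableSpace.comap (η (k + 1)) inferInstance)
      (Hk x0 w η k ⊔ MeasurableSpace.comap (w k) inferInstance) μ := by
  have h := indep_iSup_of_disjoint (infoAlg_le hmx0 hmw hmη) hindep
    (S := {Option.some (Sum.inr (k + 1))}) (T := {Option.some (Sum.inr (k + 1))}ᶜ)
    disjoint_compl_right
  have hle : ∀ (i : Option (ℕ ⊕ ℕ)) (U : Set (Option (ℕ ⊕ ℕ))), i ∈ U →
      infoAlg x0 w η i ≤ ⨆ i ∈ U, infoAlg x0 w η i := fun i U hi =>
    le_iSup₂ (f := fun i (_ : i ∈ U) => infoAlg x0 w η i) i hi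
  refine indep_mono h ?_ ?_
  · exact hle (Option.some (Sum.inr (k + 1))) _ rfl
  · refine sup_le (sup_le (sup_le ?_ ?_) ?_) ?_
    · exact hle none _ (by simp)
    · refine iSup₂_le fun j _ => hle (Option.some (Sum.inl j)) _ ?_
      intro hc
      simp at hc
    · refine iSup₂_le fun j hj => hle (Option.some (Sum.inr j)) _ ?_
      intro hc
      simp only [Set.mem_singleton_iff, Option.some.injEq, Sum.inr.injEq] at hc
      have := Set.mem_Iic.mp hj
      omega
    · refine hle (Option.some (Sum.inl k)) _ ?_
      intro hc
      simp at hc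

end SigmaAlgAux

section FilterAux

variable {Ω' : Type*} {n : ℕ} {η : ℕ → Ω' → ℝ} {x : ℕ → Ω' → Fin n → ℝ}

/-- On the event `{η_{k+1} = 0}`, every `Y_{k+1}`-measurable set agrees with a
`Y_k`-measurable set. -/
lemma GY_inter_eq (η : ℕ → Ω' → ℝ) (x : ℕ → Ω' → Fin n → ℝ) (k : ℕ)
    {s : Set Ω'} (hs : MeasurableSet[GY η x (k + 1)] s) :
    ∃ A, MeasurableSet[GY η x k] A ∧
      s ∩ {ω | η (k + 1) ω = 0} = A ∩ {ω | η (k + 1) ω = 0} := by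
  set T : Set Ω' := {ω | η (k + 1) ω = 0} with hTdef
  let p : Set Ω' → Prop := fun s => ∃ A, MeasurableSet[GY η x k] A ∧ s ∩ T = A ∩ T
  let mP : MeasurableSpace Ω' :=
    { MeasurableSet' := p
      measurableSet_empty := ⟨∅, (@MeasurableSet.empty _ (GY η x k)), rfl⟩
      measurableSet_compl := by
        rintro t ⟨A, hA, htA⟩
        refine ⟨Aᶜ, hA.compl, ?_⟩
        ext ω
        have h := Set.ext_iff.mp htA ω
        simp only [Set.mem_inter_iff, Set.mem_compl_iff] at h ⊢
        tauto
      measurableSet_iUnion := by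
        intro f hf
        choose A hA hAe using hf
        exact ⟨⋃ i, A i, (@MeasurableSet.iUnion _ _ (GY η x k) _ _ hA), by
          rw [Set.iUnion_inter, Set.iUnion_inter]; exact Set.iUnion_congr hAe⟩ }
  have hYk_le : GY η x k ≤ mP := fun t ht => ⟨t, ht, rfl⟩
  have hle : GY η x (k + 1) ≤ mP := by
    refine iSup₂_le fun j hj => ?_
    rcases Nat.lt_or_ge j (k + 1) with hjk | hjk
    · refine le_trans ?_ hYk_le
      refine le_trans ?_
        (le_iSup₂ (f := fun j (_ : j ∈ Set.Iic k) =>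
          (MeasurableSpace.comap (η j) inferInstance ⊔
            MeasurableSpace.comap (fun ω => η j ω • x j ω) inferInstance))
          j (Set.mem_Iic.mpr (Nat.lt_succ_iff.mp hjk)))
      exact le_rfl
    · have hj1 : j = k + 1 := le_antisymm (Set.mem_Iic.mp hj) hjk
      subst hj1
      refine sup_le ?_ ?_
      · intro t ht
        obtain ⟨U, _, rfl⟩ := ht
        by_cases h0 : (0 : ℝ) ∈ U
        · refine ⟨Set.univ, (@MeasurableSet.univ _ (GY η x k)), ?_⟩
          ext ω
          simp only [Set.mem_inter_iff, Set.mem_preimage, Set.mem_univ, true_and,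
            hTdef, Set.mem_setOf_eq]
          exact ⟨fun h => h.2, fun h => ⟨by rw [h]; exact h0, h⟩⟩
        · refine ⟨∅, (@MeasurableSet.empty _ (GY η x k)), ?_⟩
          ext ω
          simp only [Set.mem_inter_iff, Set.mem_preimage, Set.mem_empty_iff_false,
            false_and, iff_false, hTdef, Set.mem_setOf_eq, not_and]
          intro hU hη0
          exact absurd (hη0 ▸ hU) h0
      · intro t ht
        obtain ⟨U, _, rfl⟩ := ht
        by_cases h0 : (0 : Fin n → ℝ) ∈ U
        · refine ⟨Set.univ, (@MeasurableSet.univ _ (GY η x k)), ?_⟩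
          ext ω
          simp only [Set.mem_inter_iff, Set.mem_preimage, Set.mem_univ, true_and,
            hTdef, Set.mem_setOf_eq]
          refine ⟨fun h => h.2, fun h => ⟨?_, h⟩⟩
          have : η (k + 1) ω • x (k + 1) ω = 0 := by rw [h, zero_smul]
          rw [this]; exact h0
        · refine ⟨∅, (@MeasurableSet.empty _ (GY η x k)), ?_⟩
          ext ω
          simp only [Set.mem_inter_iff, Set.mem_preimage, Set.mem_empty_iff_false,
            false_and, iff_false, hTdef, Set.mem_setOf_eq, not_and]
          intro hU hη0
          have : η (k + 1) ω • x (k + 1) ω = 0 := by rw [hη0, zero_smul]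
          exact absurd (this ▸ hU) h0
  exact hle s hs

/-- The recursive structure of the estimator under Bernoulli dropouts. -/
lemma filtering {mG m0 : MeasurableSpace Ω'} {μ : Measure Ω'} [IsProbabilityMeasure μ]
    (k : ℕ)
    (hGY1 : GY η x (k + 1) ≤ m0) (hGY0 : GY η x k ≤ m0)
    (hYG : GY η x k ≤ mG)
    (hxG : Measurable[mG] (x (k + 1)))
    (hη : Measurable[m0] (η (k + 1)))
    (hη01 : ∀ ω, η (k + 1) ω = 0 ∨ η (k + 1) ω = 1)
    (hindep : Indep (MeasurableSpace.comap (η (k + 1)) inferInstance) mG μ)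
    (hxint : Integrable (x (k + 1)) μ) :
    μ[x (k + 1)|GY η x (k + 1)] =ᵐ[μ]
      fun ω => η (k + 1) ω • x (k + 1) ω
        + (1 - η (k + 1) ω) • (μ[x (k + 1)|GY η x k]) ω := by
  set xhat : Ω' → Fin n → ℝ := μ[x (k + 1)|GY η x k] with hxhat
  have hη1mem : MemLp (η (k + 1)) ⊤ μ :=
    memLp_top_of_bound hη.aestronglyMeasurable 1
      (Filter.Eventually.of_forall fun ω => by
        rcases hη01 ω with h | h <;> simp [h, Real.norm_eq_abs])
  have hη2mem : MemLp (fun ω => 1 - η (k + 1) ω) ⊤ μ :=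
    memLp_top_of_bound (measurable_const.sub hη).aestronglyMeasurable 1
      (Filter.Eventually.of_forall fun ω => by
        rcases hη01 ω with h | h <;> simp [h, Real.norm_eq_abs])
  have hxhatint : Integrable xhat μ := integrable_condExp
  have hg1 : Integrable (fun ω => η (k + 1) ω • x (k + 1) ω) μ :=
    hxint.smul_of_top_right hη1mem
  have hg2 : Integrable (fun ω => (1 - η (k + 1) ω) • xhat ω) μ :=
    hxhatint.smul_of_top_right hη2mem
  have hgint : Integrable
      (fun ω => η (k + 1) ω • x (k + 1) ω + (1 - η (k + 1) ω) • xhat ω) μ := hg1.add hg2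
  have hmeta : Measurable[GY η x (k + 1)] (η (k + 1)) :=
    Measurable.of_comap_le (le_trans le_sup_left
      (le_iSup₂ (f := fun j (_ : j ∈ Set.Iic (k + 1)) =>
        (MeasurableSpace.comap (η j) inferInstance ⊔
          MeasurableSpace.comap (fun ω => η j ω • x j ω) inferInstance))
        (k + 1) (Set.mem_Iic.mpr le_rfl)))
  have hmetax : Measurable[GY η x (k + 1)] (fun ω => η (k + 1) ω • x (k + 1) ω) :=
    Measurable.of_comap_le (le_trans le_sup_right
      (le_iSup₂ (f := fun j (_ : j ∈ Set.Iic (k + 1)) =>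
        (MeasurableSpace.comap (η j) inferInstance ⊔
          MeasurableSpace.comap (fun ω => η j ω • x j ω) inferInstance))
        (k + 1) (Set.mem_Iic.mpr le_rfl)))
  refine (ae_eq_condExp_of_forall_setIntegral_eq hGY1 hxint
    (fun s _ _ => hgint.integrableOn) (fun s hs _ => ?_) ?_).symm
  swap
  · refine StronglyMeasurable.aestronglyMeasurable ?_
    refine StronglyMeasurable.add hmetax.stronglyMeasurable ?_
    exact ((measurable_const.sub hmeta).stronglyMeasurable).smul
      (stronglyMeasurable_condExp.mono (GY_mono (Nat.le_succ k)))
  · -- the set-integral identity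
    obtain ⟨A, hA, hsA⟩ := GY_inter_eq η x k hs
    have hsm : MeasurableSet s := hGY1 s hs
    have hAm : MeasurableSet A := hGY0 A hA
    have hTm : MeasurableSet {ω | η (k + 1) ω = 0} := hη (measurableSet_singleton 0)
    have hkey : ∫ ω in s,
        (x (k + 1) ω - (η (k + 1) ω • x (k + 1) ω + (1 - η (k + 1) ω) • xhat ω)) ∂μ = 0 := by
      funext i
      have hdint : Integrable
          (fun ω => x (k + 1) ω
            - (η (k + 1) ω • x (k + 1) ω + (1 - η (k + 1) ω) • xhat ω)) μ := hxint.sub hgint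
      rw [pi_integral_apply hdint.integrableOn i]
      have hpt : ∀ ω, s.indicator (fun ω' => (x (k + 1) ω'
            - (η (k + 1) ω' • x (k + 1) ω' + (1 - η (k + 1) ω') • xhat ω')) i) ω
          = ({ω' | η (k + 1) ω' = 0}.indicator (fun _ => (1 : ℝ)) ω)
            * (A.indicator (fun ω' => x (k + 1) ω' i - xhat ω' i) ω) := by
        intro ω
        rcases hη01 ω with h0 | h1
        · have hωT : ω ∈ {ω' | η (k + 1) ω' = 0} := h0
          have hmem : ω ∈ s ↔ ω ∈ A := by
            have h := Set.ext_iff.mp hsA ω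
            simp only [Set.mem_inter_iff] at h
            exact ⟨fun hω => (h.mp ⟨hω, hωT⟩).1, fun hω => (h.mpr ⟨hω, hωT⟩).1⟩
          by_cases hω : ω ∈ s
          · rw [Set.indicator_of_mem hω, Set.indicator_of_mem hωT,
              Set.indicator_of_mem (hmem.mp hω)]
            simp [h0]
          · rw [Set.indicator_of_notMem hω,
              Set.indicator_of_notMem (fun hc => hω (hmem.mpr hc))]
            ring
        · have hωT : ω ∉ {ω' | η (k + 1) ω' = 0} := by
            simp only [Set.mem_setOf_eq, h1]; norm_num
          rw [Set.indicator_of_notMem hωT]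
          have : (x (k + 1) ω
              - (η (k + 1) ω • x (k + 1) ω + (1 - η (k + 1) ω) • xhat ω)) i = 0 := by
            simp [h1]
          by_cases hω : ω ∈ s
          · rw [Set.indicator_of_mem hω, this]; ring
          · rw [Set.indicator_of_notMem hω]; ring
      rw [← integral_indicator hsm]
      rw [integral_congr_ae (Filter.Eventually.of_forall hpt)]
      have hvi : Integrable (fun ω => x (k + 1) ω i - xhat ω i) μ := by
        have := integrable_apply_of_integrable (hxint.sub hxhatint) i
        simpa using this
      have hindi : Integrable (A.indicator fun ω => x (k + 1) ω i - xhat ω i) μ :=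
        hvi.indicator hAm
      have hTint : Integrable ({ω' | η (k + 1) ω' = 0}.indicator fun _ => (1 : ℝ)) μ :=
        (integrable_const (1 : ℝ)).indicator hTm
      have hIF : IndepFun ({ω' | η (k + 1) ω' = 0}.indicator fun _ => (1 : ℝ))
          (A.indicator fun ω => x (k + 1) ω i - xhat ω i) μ := by
        rw [IndepFun_iff_Indep]
        refine indep_mono hindep ?_ ?_
        · refine Measurable.comap_le (Measurable.indicator measurable_const ?_)
          exact MeasurableSpace.measurableSet_comap.mpr ⟨{0}, measurableSet_singleton 0, rfl⟩
        · refine Measurable.comap_le (Measurable.indicator ?_ (hYG A hA))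
          refine Measurable.sub ?_ ?_
          · exact (measurable_pi_apply i).comp hxG
          · exact (measurable_pi_apply i).comp
              ((stronglyMeasurable_condExp.mono hYG).measurable)
      have hfe : (fun ω => ({ω' | η (k + 1) ω' = 0}.indicator (fun _ => (1 : ℝ))) ω
            * (A.indicator fun ω' => x (k + 1) ω' i - xhat ω' i) ω)
          = ({ω' | η (k + 1) ω' = 0}.indicator (fun _ => (1 : ℝ)))
            * (A.indicator fun ω' => x (k + 1) ω' i - xhat ω' i) := rfl
      have hAzero : ∫ ω, (A.indicator fun ω' => x (k + 1) ω' i - xhat ω' i) ω ∂μ = 0 := by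
        have hsubint : Integrable (fun ω => x (k + 1) ω - xhat ω) (μ.restrict A) :=
          hxint.integrableOn.sub hxhatint.integrableOn
        have h1 : (∫ ω in A, (x (k + 1) ω - xhat ω) ∂μ) i
            = ∫ ω in A, (x (k + 1) ω i - xhat ω i) ∂μ := by
          rw [pi_integral_apply hsubint i]
          simp
        rw [integral_indicator hAm, ← h1,
          integral_sub hxint.integrableOn hxhatint.integrableOn,
          setIntegral_condExp hGY0 hxint hA]
        simp
      rw [hfe, hIF.integral_mul_eq_mul_integral hTint.aestronglyMeasurable hindi.aestronglyMeasurable, hAzero, mul_zero]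
      simp
    have h2 : (∫ ω in s, x (k + 1) ω ∂μ)
        - ∫ ω in s, (η (k + 1) ω • x (k + 1) ω + (1 - η (k + 1) ω) • xhat ω) ∂μ = 0 := by
      rw [← integral_sub (hxint.integrableOn (s := s)) (hgint.integrableOn (s := s))]
      exact hkey
    exact (sub_eq_zero.mp h2).symm

lemma integral_of_indicator01 {Ω' : Type*} {m0 : MeasurableSpace Ω'} {μ : Measure Ω'}
    [IsProbabilityMeasure μ] {θ : Ω' → ℝ} (hθ : Measurable[m0] θ)
    (h01 : ∀ ω, θ ω = 0 ∨ θ ω = 1) {q : ℝ} (hq0 : 0 ≤ q)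
    (hq : μ {ω | θ ω = 1} = ENNReal.ofReal q) :
    ∫ ω, θ ω ∂μ = q := by
  have hpt : θ = {ω | θ ω = 1}.indicator (fun _ => (1 : ℝ)) := by
    funext ω
    rcases h01 ω with h | h <;> simp [Set.indicator_apply, h]
  have hms : MeasurableSet {ω | θ ω = 1} := hθ (measurableSet_singleton 1)
  rw [hpt, integral_indicator hms, setIntegral_const, measureReal_def, hq,
    smul_eq_mul, mul_one, ENNReal.toReal_ofReal hq0]

end FilterAux

section MatrixAux

lemma transpose_eq_of_posSemidef {d : ℕ} {M : Matrix (Fin d) (Fin d) ℝ} (h : M.PosSemidef) :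
    Mᵀ = M := by
  have h1 := h.1
  rwa [Matrix.IsHermitian, Matrix.conjTranspose_eq_transpose_of_trivial] at h1

namespace Sys

variable {n mL mR : ℕ} (S : Sys n mL mR)

lemma Rc_symm (hRL : S.RLᵀ = S.RL) (hRR : S.RRᵀ = S.RR) : S.Rcᵀ = S.Rc := by
  simp [Rc, Matrix.fromBlocks_transpose, hRL, hRR]

lemma Ups_symm {Z : Matrix (Fin n) (Fin n) ℝ} (hZ : Zᵀ = Z)
    (hRL : S.RLᵀ = S.RL) (hRR : S.RRᵀ = S.RR) : (S.Ups Z)ᵀ = S.Ups Z := by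
  simp [Ups, Matrix.transpose_add, Matrix.transpose_mul, Matrix.transpose_transpose, hZ,
    Matrix.mul_assoc, S.Rc_symm hRL hRR]

lemma Psi_symm {Z X : Matrix (Fin n) (Fin n) ℝ} (hZ : Zᵀ = Z) (hX : Xᵀ = X) :
    (S.Psi Z X)ᵀ = S.Psi Z X := by
  simp [Psi, Matrix.transpose_add, Matrix.transpose_smul, hZ, hX]

lemma Lam_symm {Ψ : Matrix (Fin n) (Fin n) ℝ} (hΨ : Ψᵀ = Ψ) (hRL : S.RLᵀ = S.RL) :
    (S.Lam Ψ)ᵀ = S.Lam Ψ := by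
  simp [Lam, Matrix.transpose_add, Matrix.transpose_mul, Matrix.transpose_transpose, hΨ,
    Matrix.mul_assoc, hRL]

lemma Zstep_symm {Z : Matrix (Fin n) (Fin n) ℝ} (hZ : Zᵀ = Z) (hQ : S.Qᵀ = S.Q)
    (hRL : S.RLᵀ = S.RL) (hRR : S.RRᵀ = S.RR) : (S.Zstep Z)ᵀ = S.Zstep Z := by
  simp [Zstep, Matrix.transpose_sub, Matrix.transpose_add, Matrix.transpose_mul,
    Matrix.transpose_transpose, hZ, hQ, Matrix.mul_assoc, S.Ups_symm hZ hRL hRR]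

lemma Xstep_symm {Ψ : Matrix (Fin n) (Fin n) ℝ} (hΨ : Ψᵀ = Ψ) (hQ : S.Qᵀ = S.Q)
    (hRL : S.RLᵀ = S.RL) : (S.Xstep Ψ)ᵀ = S.Xstep Ψ := by
  simp [Xstep, Matrix.transpose_sub, Matrix.transpose_add, Matrix.transpose_mul,
    Matrix.transpose_transpose, Matrix.transpose_nonsing_inv, hΨ, hQ, Matrix.mul_assoc,
    S.Lam_symm hΨ hRL]

lemma ZX_symm {P : Matrix (Fin n) (Fin n) ℝ} (hQ : S.Qᵀ = S.Q) (hRL : S.RLᵀ = S.RL)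
    (hRR : S.RRᵀ = S.RR) (hP : Pᵀ = P) :
    ∀ j, ((S.ZX P j).1)ᵀ = (S.ZX P j).1 ∧ ((S.ZX P j).2)ᵀ = (S.ZX P j).2 := by
  intro j
  induction j with
  | zero => exact ⟨hP, hP⟩
  | succ j ih =>
    refine ⟨S.Zstep_symm ih.1 hQ hRL hRR, S.Xstep_symm ?_ hQ hRL⟩
    exact S.Psi_symm ih.1 ih.2

lemma Kg_quad {Z : Matrix (Fin n) (Fin n) ℝ} (hU : IsUnit (S.Ups Z).det)
    (hUs : (S.Ups Z)ᵀ = S.Ups Z) :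
    (S.Kg Z)ᵀ * S.Ups Z * S.Kg Z
      = (S.Bcᵀ * Z * S.A)ᵀ * (S.Ups Z)⁻¹ * (S.Bcᵀ * Z * S.A) := by
  rw [Kg]
  generalize S.Bcᵀ * Z * S.A = W
  rw [Matrix.transpose_mul, Matrix.transpose_nonsing_inv, hUs, Matrix.mul_assoc Wᵀ,
    Matrix.nonsing_inv_mul _ hU, Matrix.mul_one, Matrix.mul_assoc, ← Matrix.mul_assoc]

/-- The central deterministic computation behind the costate equation. -/
lemma key_algebra (Z' X' : Matrix (Fin n) (Fin n) ℝ)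
    (hZs : Z'ᵀ = Z') (hPsis : (S.Psi Z' X')ᵀ = S.Psi Z' X')
    (hRLs : S.RLᵀ = S.RL) (hRRs : S.RRᵀ = S.RR)
    (hUdet : IsUnit (S.Ups Z').det) (hLdet : IsUnit (S.Lam (S.Psi Z' X')).det)
    (xv xhv : Fin n → ℝ) (uLv uLhv : Fin mL → ℝ) (uRv : Fin mR → ℝ)
    (hL : S.BLᵀ *ᵥ (Z' *ᵥ (S.A *ᵥ xv + S.BL *ᵥ uLv + S.BR *ᵥ uRv)
          + S.p • ((X' - Z') *ᵥ ((S.A *ᵥ xv + S.BL *ᵥ uLv + S.BR *ᵥ uRv)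
              - (S.A *ᵥ xhv + S.BL *ᵥ uLhv + S.BR *ᵥ uRv))))
        + S.RL *ᵥ uLv = 0)
    (hLy : S.BLᵀ *ᵥ (Z' *ᵥ (S.A *ᵥ xhv + S.BL *ᵥ uLhv + S.BR *ᵥ uRv)) + S.RL *ᵥ uLhv = 0)
    (hR : S.BRᵀ *ᵥ (Z' *ᵥ (S.A *ᵥ xhv + S.BL *ᵥ uLhv + S.BR *ᵥ uRv)) + S.RR *ᵥ uRv = 0) :
    (S.Zstep Z') *ᵥ xhv + (S.Xstep (S.Psi Z' X')) *ᵥ (xv - xhv)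
      = S.Aᵀ *ᵥ (Z' *ᵥ (S.A *ᵥ xv + S.BL *ᵥ uLv + S.BR *ᵥ uRv)
          + S.p • ((X' - Z') *ᵥ ((S.A *ᵥ xv + S.BL *ᵥ uLv + S.BR *ᵥ uRv)
              - (S.A *ᵥ xhv + S.BL *ᵥ uLhv + S.BR *ᵥ uRv))))
        + S.Q *ᵥ xv := by
  set Ψ := S.Psi Z' X' with hΨdef
  set pF : Fin n → ℝ := S.A *ᵥ xv + S.BL *ᵥ uLv + S.BR *ᵥ uRv with hpF
  set pY : Fin n → ℝ := S.A *ᵥ xhv + S.BL *ᵥ uLhv + S.BR *ᵥ uRv with hpY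
  set ev : Fin n → ℝ := pF - pY with hev
  set dv : Fin n → ℝ := xv - xhv with hdv
  set du : Fin mL → ℝ := uLv - uLhv with hdu
  set uc : Fin mL ⊕ Fin mR → ℝ := Sum.elim uLhv uRv with huc
  -- ev in terms of dv, du
  have hev2 : ev = S.A *ᵥ dv + S.BL *ᵥ du := by
    rw [hev, hpF, hpY, hdv, hdu, Matrix.mulVec_sub, Matrix.mulVec_sub]
    abel
  -- Ψ action
  have hPsiVec : ∀ v : Fin n → ℝ, Ψ *ᵥ v = Z' *ᵥ v + S.p • ((X' - Z') *ᵥ v) := by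
    intro v
    rw [hΨdef, Sys.Psi, Matrix.add_mulVec, Matrix.smul_mulVec, Matrix.smul_mulVec,
      Matrix.sub_mulVec]
    module
  -- the stacked stationarity identity
  have hstack : S.Bcᵀ *ᵥ (Z' *ᵥ pY) + S.Rc *ᵥ uc = 0 := by
    rw [Sys.Bc, Matrix.transpose_fromCols, Matrix.fromRows_mulVec, Sys.Rc, huc,
      Matrix.fromBlocks_mulVec]
    funext i
    rcases i with i | i
    · have h := congrFun hLy i
      simpa [Sum.elim_comp_inl, Sum.elim_comp_inr, Matrix.zero_mulVec] using h
    · have h := congrFun hR i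
      simpa [Sum.elim_comp_inl, Sum.elim_comp_inr, Matrix.zero_mulVec] using h
  have hBcuc : S.Bc *ᵥ uc = S.BL *ᵥ uLhv + S.BR *ᵥ uRv := by
    rw [Sys.Bc, huc, Matrix.fromCols_mulVec_sumElim]
  -- W xhv + Ups uc = 0
  have hWU : (S.Bcᵀ * Z' * S.A) *ᵥ xhv + S.Ups Z' *ᵥ uc = 0 := by
    have e1 : (S.Bcᵀ * Z' * S.A) *ᵥ xhv = S.Bcᵀ *ᵥ (Z' *ᵥ (S.A *ᵥ xhv)) := by
      rw [Matrix.mulVec_mulVec, Matrix.mulVec_mulVec]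
    have e2 : S.Ups Z' *ᵥ uc
        = S.Bcᵀ *ᵥ (Z' *ᵥ (S.BL *ᵥ uLhv + S.BR *ᵥ uRv)) + S.Rc *ᵥ uc := by
      rw [Sys.Ups, Matrix.add_mulVec]
      congr 1
      rw [← hBcuc, Matrix.mulVec_mulVec, Matrix.mulVec_mulVec]
    have e3 : S.Bcᵀ *ᵥ (Z' *ᵥ (S.A *ᵥ xhv))
          + (S.Bcᵀ *ᵥ (Z' *ᵥ (S.BL *ᵥ uLhv + S.BR *ᵥ uRv)) + S.Rc *ᵥ uc)
        = S.Bcᵀ *ᵥ (Z' *ᵥ pY) + S.Rc *ᵥ uc := by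
      rw [hpY]
      simp only [Matrix.mulVec_add]
      abel
    rw [e1, e2, e3]
    exact hstack
  -- K'ΥK xhv = -(Aᵀ *ᵥ (Z' *ᵥ (Bc *ᵥ uc)))
  have hKK : ((S.Kg Z')ᵀ * S.Ups Z' * S.Kg Z') *ᵥ xhv
      = -(S.Aᵀ *ᵥ (Z' *ᵥ (S.Bc *ᵥ uc))) := by
    rw [S.Kg_quad hUdet (S.Ups_symm hZs hRLs hRRs)]
    rw [← Matrix.mulVec_mulVec (v := xhv) (M := (S.Bcᵀ * Z' * S.A)ᵀ * (S.Ups Z')⁻¹)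
      (N := S.Bcᵀ * Z' * S.A)]
    rw [← Matrix.mulVec_mulVec (M := (S.Bcᵀ * Z' * S.A)ᵀ) (N := (S.Ups Z')⁻¹)]
    have h1 : (S.Bcᵀ * Z' * S.A) *ᵥ xhv = -(S.Ups Z' *ᵥ uc) := by
      have h := hWU
      have := eq_neg_of_add_eq_zero_left h
      exact this
    rw [h1, Matrix.mulVec_neg, Matrix.mulVec_neg,
      Matrix.mulVec_mulVec (v := uc) (M := (S.Ups Z')⁻¹) (N := S.Ups Z'),
      Matrix.nonsing_inv_mul _ hUdet, Matrix.one_mulVec]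
    have h2 : (S.Bcᵀ * Z' * S.A)ᵀ = S.Aᵀ * Z' * S.Bc := by
      rw [Matrix.transpose_mul, Matrix.transpose_mul, Matrix.transpose_transpose, hZs,
        Matrix.mul_assoc]
    rw [h2, ← Matrix.mulVec_mulVec (v := uc) (M := S.Aᵀ * Z') (N := S.Bc),
      ← Matrix.mulVec_mulVec (v := S.Bc *ᵥ uc) (M := S.Aᵀ) (N := Z')]
  -- Zstep identity
  have hZid : (S.Zstep Z') *ᵥ xhv = S.Aᵀ *ᵥ (Z' *ᵥ pY) + S.Q *ᵥ xhv := by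
    rw [Sys.Zstep, Matrix.sub_mulVec, Matrix.add_mulVec, hKK, hBcuc]
    rw [← Matrix.mulVec_mulVec (v := xhv) (M := S.Aᵀ * Z') (N := S.A),
      ← Matrix.mulVec_mulVec (v := S.A *ᵥ xhv) (M := S.Aᵀ) (N := Z'), hpY]
    simp only [Matrix.mulVec_add]
    abel
  -- the dagger identity
  have hdag : S.Mg Ψ *ᵥ dv + S.Lam Ψ *ᵥ du = 0 := by
    have hsub : S.BLᵀ *ᵥ (Z' *ᵥ ev) + S.p • (S.BLᵀ *ᵥ ((X' - Z') *ᵥ ev))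
        + S.RL *ᵥ du = 0 := by
      have h1 := hL
      have h3 : Z' *ᵥ pF = Z' *ᵥ pY + Z' *ᵥ ev := by
        rw [hev, Matrix.mulVec_sub]; abel
      rw [h3] at h1
      simp only [Matrix.mulVec_add, Matrix.mulVec_smul] at h1
      have h5 : S.RL *ᵥ du = S.RL *ᵥ uLv - S.RL *ᵥ uLhv := by
        rw [hdu, Matrix.mulVec_sub]
      rw [h5]
      have h2 := hLy
      linear_combination (norm := module) h1 - h2
    have hPsiev : S.BLᵀ *ᵥ (Ψ *ᵥ ev)
        = S.BLᵀ *ᵥ (Z' *ᵥ ev) + S.p • (S.BLᵀ *ᵥ ((X' - Z') *ᵥ ev)) := by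
      rw [hPsiVec ev]
      simp only [Matrix.mulVec_add, Matrix.mulVec_smul]
    have hsub2 : S.BLᵀ *ᵥ (Ψ *ᵥ ev) + S.RL *ᵥ du = 0 := by
      rw [hPsiev]
      linear_combination (norm := module) hsub
    rw [hev2] at hsub2
    rw [Sys.Mg, Sys.Lam, Matrix.add_mulVec,
      ← Matrix.mulVec_mulVec (v := dv) (M := S.BLᵀ * Ψ) (N := S.A),
      ← Matrix.mulVec_mulVec (v := S.A *ᵥ dv) (M := S.BLᵀ) (N := Ψ),
      ← Matrix.mulVec_mulVec (v := du) (M := S.BLᵀ * Ψ) (N := S.BL),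
      ← Matrix.mulVec_mulVec (v := S.BL *ᵥ du) (M := S.BLᵀ) (N := Ψ)]
    simp only [Matrix.mulVec_add] at hsub2
    linear_combination (norm := module) hsub2
  -- Xstep identity
  have hXid : (S.Xstep Ψ) *ᵥ dv = S.Aᵀ *ᵥ (Ψ *ᵥ ev) + S.Q *ᵥ dv := by
    have hM : S.Mg Ψ *ᵥ dv = -(S.Lam Ψ *ᵥ du) := eq_neg_of_add_eq_zero_left hdag
    have hMt : (S.Mg Ψ)ᵀ = S.Aᵀ * Ψ * S.BL := by
      rw [Sys.Mg, Matrix.transpose_mul, Matrix.transpose_mul, Matrix.transpose_transpose,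
        hPsis, Matrix.mul_assoc]
    rw [Sys.Xstep, Matrix.sub_mulVec, Matrix.add_mulVec,
      ← Matrix.mulVec_mulVec (v := dv) (M := (S.Mg Ψ)ᵀ * (S.Lam Ψ)⁻¹) (N := S.Mg Ψ),
      ← Matrix.mulVec_mulVec (v := S.Mg Ψ *ᵥ dv) (M := (S.Mg Ψ)ᵀ) (N := (S.Lam Ψ)⁻¹),
      hM, Matrix.mulVec_neg, Matrix.mulVec_neg,
      Matrix.mulVec_mulVec (v := du) (M := (S.Lam Ψ)⁻¹) (N := S.Lam Ψ),
      Matrix.nonsing_inv_mul _ hLdet, Matrix.one_mulVec, hMt,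
      ← Matrix.mulVec_mulVec (v := du) (M := S.Aᵀ * Ψ) (N := S.BL),
      ← Matrix.mulVec_mulVec (v := S.BL *ᵥ du) (M := S.Aᵀ) (N := Ψ),
      ← Matrix.mulVec_mulVec (v := dv) (M := S.Aᵀ * Ψ) (N := S.A),
      ← Matrix.mulVec_mulVec (v := S.A *ᵥ dv) (M := S.Aᵀ) (N := Ψ),
      hev2]
    simp only [Matrix.mulVec_add]
    module
  -- assemble
  have hQx : S.Q *ᵥ xv = S.Q *ᵥ xhv + S.Q *ᵥ dv := by
    rw [hdv, Matrix.mulVec_sub]; abel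
  have hF : Z' *ᵥ pF = Z' *ᵥ pY + Z' *ᵥ ev := by
    rw [hev, Matrix.mulVec_sub]; abel
  calc (S.Zstep Z') *ᵥ xhv + (S.Xstep Ψ) *ᵥ dv
      = (S.Aᵀ *ᵥ (Z' *ᵥ pY) + S.Q *ᵥ xhv) + (S.Aᵀ *ᵥ (Ψ *ᵥ ev) + S.Q *ᵥ dv) := by
        rw [hZid, hXid]
    _ = S.Aᵀ *ᵥ (Z' *ᵥ pF + S.p • ((X' - Z') *ᵥ ev)) + S.Q *ᵥ xv := by
        rw [hQx, hF, hPsiVec ev]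
        simp only [Matrix.mulVec_add, Matrix.mulVec_smul]
        module

end Sys

end MatrixAux

/-- Lemma 1 of the paper.  Under the standing probabilistic
assumptions on the networked control system, if `Υ_k > 0` and `Λ_k > 0` along the
Riccati recursion, then the process `λ_{k−1} = Z_k x̂_{k|k} + X_k x̃_k` (here `lam k`
denotes `λ_{k−1}`, `x̂_{k|k} = E[x_k | F{Y_k}]` and `x̃_k = x_k − x̂_{k|k}`) solves the
forward–backward stochastic difference equations: the costate equation
`λ_{k−1} = E[A′λ_k | F_k] + Q x_k` for `k = 0, …, N` and the terminal condition
`λ_N = P_{N+1} x_{N+1}`, provided the controls satisfy the stationarity conditions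
`0 = E[(B^L)′λ_k | F_k] + R^L u_k^L` and `0 = E[(B^R)′λ_k | F{Y_k}] + R^R u_k^R`. -/
theorem lemma1 {n mL mR N : ℕ} (S : Sys n mL mR)
    (P : Matrix (Fin n) (Fin n) ℝ)
    (μ : Measure Ω) [IsProbabilityMeasure μ]
    (x0 : Ω → Fin n → ℝ) (w : ℕ → Ω → Fin n → ℝ) (η : ℕ → Ω → ℝ)
    (x : ℕ → Ω → Fin n → ℝ) (uL : ℕ → Ω → Fin mL → ℝ) (uR : ℕ → Ω → Fin mR → ℝ)
    (lam : ℕ → Ω → Fin n → ℝ)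
    -- positive semidefinite weights
    (hQpsd : S.Q.PosSemidef) (hRLpsd : S.RL.PosSemidef) (hRRpsd : S.RR.PosSemidef)
    (hPpsd : P.PosSemidef) (hp0 : 0 ≤ S.p) (hp1 : S.p ≤ 1)
    -- probabilistic structure
    (hmx0 : Measurable x0) (hmw : ∀ k, Measurable (w k)) (hmη : ∀ k, Measurable (η k))
    (hη01 : ∀ k ω, η k ω = 0 ∨ η k ω = 1)
    (hη1 : ∀ k, μ {ω | η k ω = 1} = ENNReal.ofReal (1 - S.p))
    (hindep : iIndep (infoAlg x0 w η) μ)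
    (hwmean : ∀ k, ∫ ω, w k ω ∂μ = 0)
    -- square integrability
    (hx0L2 : MemLp x0 2 μ) (hwL2 : ∀ k, MemLp (w k) 2 μ)
    (hxL2 : ∀ k, MemLp (x k) 2 μ)
    (huLL2 : ∀ k, MemLp (uL k) 2 μ) (huRL2 : ∀ k, MemLp (uR k) 2 μ)
    -- plant dynamics
    (hx0eq : x 0 = x0)
    (hdyn : ∀ k ω, x (k + 1) ω
      = S.A *ᵥ x k ω + S.BL *ᵥ uL k ω + S.BR *ᵥ uR k ω + w k ω)
    -- admissible information structure of the controllers
    (huRmeas : ∀ k, StronglyMeasurable[GY η x k] (uR k))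
    (huLmeas : ∀ k, StronglyMeasurable[Fk x0 w η x k] (uL k))
    -- positivity of `Υ_k` and `Λ_k` along the recursion
    (hUps : ∀ k, k ≤ N → (S.Ups ((S.ZX P (N - k)).1)).PosDef)
    (hLam : ∀ k, k ≤ N →
      (S.Lam (S.Psi (S.ZX P (N - k)).1 (S.ZX P (N - k)).2)).PosDef)
    -- the candidate costate process `λ_{k−1} = Z_k x̂_{k|k} + X_k x̃_k`
    (hlam : ∀ k ω, lam k ω
      = (S.ZX P (N + 1 - k)).1 *ᵥ (μ[x k | GY η x k]) ω
        + (S.ZX P (N + 1 - k)).2 *ᵥ (x k ω - (μ[x k | GY η x k]) ω))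
    -- stationarity conditions on the controls
    (hstatL : ∀ k, k ≤ N →
      (fun ω => (μ[fun ω' => S.BLᵀ *ᵥ lam (k + 1) ω' | Fk x0 w η x k]) ω
        + S.RL *ᵥ uL k ω) =ᵐ[μ] 0)
    (hstatR : ∀ k, k ≤ N →
      (fun ω => (μ[fun ω' => S.BRᵀ *ᵥ lam (k + 1) ω' | GY η x k]) ω
        + S.RR *ᵥ uR k ω) =ᵐ[μ] 0) :
    (∀ k, k ≤ N →
      lam k =ᵐ[μ]
        fun ω => (μ[fun ω' => S.Aᵀ *ᵥ lam (k + 1) ω' | Fk x0 w η x k]) ω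
          + S.Q *ᵥ x k ω) ∧
    lam (N + 1) =ᵐ[μ] fun ω => P *ᵥ x (N + 1) ω := by
  constructor
  · intro k hk
    -- σ-algebra facts
    have hFleH : ∀ j, Fk x0 w η x j ≤ Hk x0 w η j := Fk_le_Hk hx0eq hdyn huRmeas huLmeas
    have hYleH : ∀ j, GY η x j ≤ Hk x0 w η j := GY_le_Hk hx0eq hdyn huRmeas huLmeas
    have hHle : ∀ j, Hk x0 w η j ≤ (inferInstance : MeasurableSpace Ω) :=
      Hk_le_ambient hmx0 hmw hmη
    have hFle : ∀ j, Fk x0 w η x j ≤ (inferInstance : MeasurableSpace Ω) := fun j =>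
      le_trans (hFleH j) (hHle j)
    have hYle : ∀ j, GY η x j ≤ (inferInstance : MeasurableSpace Ω) := fun j =>
      le_trans (hYleH j) (hHle j)
    have hxFk : ∀ j, Measurable[Fk x0 w η x j] (x j) := x_meas_Fk hx0eq hdyn huRmeas huLmeas
    have hxHk : ∀ j, Measurable[Hk x0 w η j] (x j) := struct_meas hx0eq hdyn huRmeas huLmeas
    -- integrability
    have hxi : ∀ j, Integrable (x j) μ := fun j => (hxL2 j).integrable one_le_two
    have huLi : Integrable (uL k) μ := (huLL2 k).integrable one_le_two
    have huRi : Integrable (uR k) μ := (huRL2 k).integrable one_le_two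
    have hwi : Integrable (w k) μ := (hwL2 k).integrable one_le_two
    -- Riccati data
    have hNk1 : N + 1 - (k + 1) = N - k := by omega
    have hNk2 : N + 1 - k = N - k + 1 := by omega
    set Z' := (S.ZX P (N - k)).1 with hZ'def
    set X' := (S.ZX P (N - k)).2 with hX'def
    have hsymm := S.ZX_symm (transpose_eq_of_posSemidef hQpsd)
      (transpose_eq_of_posSemidef hRLpsd) (transpose_eq_of_posSemidef hRRpsd)
      (transpose_eq_of_posSemidef hPpsd) (N - k)
    have hZs : Z'ᵀ = Z' := hsymm.1
    have hXs : X'ᵀ = X' := hsymm.2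
    have hPsis : (S.Psi Z' X')ᵀ = S.Psi Z' X' := S.Psi_symm hZs hXs
    have hUdet : IsUnit (S.Ups Z').det := ((hUps k hk).det_pos).ne'.isUnit
    have hLdet : IsUnit (S.Lam (S.Psi Z' X')).det := ((hLam k hk).det_pos).ne'.isUnit
    -- E[w_k | m] = 0
    have hw0 : ∀ m : MeasurableSpace Ω, m ≤ Hk x0 w η k → μ[w k|m] =ᵐ[μ] 0 := by
      intro m hmH
      refine condexp_of_indep_zero (le_trans hmH (hHle k)) (hmw k).comap_le
        ((Measurable.of_comap_le le_rfl).stronglyMeasurable) ?_ (hwmean k)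
      exact indep_mono (indep_w_Hk hmx0 hmw hmη hindep k) le_rfl hmH
    -- dynamics as a function identity
    have hxsucc : x (k + 1)
        = fun ω => S.A *ᵥ x k ω + S.BL *ᵥ uL k ω + S.BR *ᵥ uR k ω + w k ω :=
      funext fun ω => hdyn k ω
    have hdrift_i : Integrable (fun ω => S.A *ᵥ x k ω + S.BL *ᵥ uL k ω + S.BR *ᵥ uR k ω) μ :=
      ((integrable_mulVec S.A (hxi k)).add (integrable_mulVec S.BL huLi)).add
        (integrable_mulVec S.BR huRi)
    have hdriftY_i : Integrable (fun ω => S.A *ᵥ (μ[x k|GY η x k]) ω + S.BL *ᵥ (μ[uL k|GY η x k]) ω + S.BR *ᵥ uR k ω) μ :=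
      ((integrable_mulVec S.A integrable_condExp).add
        (integrable_mulVec S.BL integrable_condExp)).add (integrable_mulVec S.BR huRi)
    have hdriftSM : StronglyMeasurable[Fk x0 w η x k] (fun ω => S.A *ᵥ x k ω + S.BL *ᵥ uL k ω + S.BR *ᵥ uR k ω) := by
      refine Measurable.stronglyMeasurable ?_
      exact ((measurable_mulVec_comp S.A (hxFk k)).add
        (measurable_mulVec_comp S.BL (huLmeas k).measurable)).add
        (measurable_mulVec_comp S.BR ((huRmeas k).measurable.mono (GY_le_Fk k) le_rfl))
    have hdriftYSM : StronglyMeasurable[GY η x k] (fun ω => S.A *ᵥ (μ[x k|GY η x k]) ω + S.BL *ᵥ (μ[uL k|GY η x k]) ω + S.BR *ᵥ uR k ω) := by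
      refine Measurable.stronglyMeasurable ?_
      exact ((measurable_mulVec_comp S.A stronglyMeasurable_condExp.measurable).add
        (measurable_mulVec_comp S.BL stronglyMeasurable_condExp.measurable)).add
        (measurable_mulVec_comp S.BR (huRmeas k).measurable)
    -- E[x (k+1) | F_k]
    have hcondF : μ[x (k + 1)|Fk x0 w η x k] =ᵐ[μ] fun ω => S.A *ᵥ x k ω + S.BL *ᵥ uL k ω + S.BR *ᵥ uR k ω := by
      rw [hxsucc]
      have h1 := condExp_add (μ := μ) (m := Fk x0 w η x k)
        (f := fun ω => S.A *ᵥ x k ω + S.BL *ᵥ uL k ω + S.BR *ᵥ uR k ω) (g := w k) hdrift_i hwi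
      refine h1.trans ?_
      have h2 : μ[fun ω => S.A *ᵥ x k ω + S.BL *ᵥ uL k ω + S.BR *ᵥ uR k ω|Fk x0 w η x k] = fun ω => S.A *ᵥ x k ω + S.BL *ᵥ uL k ω + S.BR *ᵥ uR k ω :=
        condExp_of_stronglyMeasurable (hFle k) hdriftSM hdrift_i
      filter_upwards [hw0 (Fk x0 w η x k) (hFleH k)] with ω hω
      simp only [Pi.add_apply, h2, hω, Pi.zero_apply, add_zero]
    -- E[drift | Y_k]
    have hcondY3 : μ[fun ω => S.A *ᵥ x k ω + S.BL *ᵥ uL k ω + S.BR *ᵥ uR k ω|GY η x k] =ᵐ[μ] fun ω => S.A *ᵥ (μ[x k|GY η x k]) ω + S.BL *ᵥ (μ[uL k|GY η x k]) ω + S.BR *ᵥ uR k ω := by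
      have h1 := condexp_add3 (m := GY η x k) (μ := μ)
        (f := fun ω => S.A *ᵥ x k ω) (g := fun ω => S.BL *ᵥ uL k ω)
        (h := fun ω => S.BR *ᵥ uR k ω)
        (integrable_mulVec S.A (hxi k)) (integrable_mulVec S.BL huLi)
        (integrable_mulVec S.BR huRi)
      refine h1.trans ?_
      have e1 := condexp_mulVec (hYle k) S.A (hxi k)
      have e2 := condexp_mulVec (hYle k) S.BL huLi
      have e3 : μ[fun ω => S.BR *ᵥ uR k ω|GY η x k] = fun ω => S.BR *ᵥ uR k ω :=
        condExp_of_stronglyMeasurable (hYle k)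
          (Measurable.stronglyMeasurable (measurable_mulVec_comp S.BR (huRmeas k).measurable))
          (integrable_mulVec S.BR huRi)
      filter_upwards [e1, e2] with ω f1 f2
      rw [f1, f2, e3]
    -- E[x (k+1) | Y_k]
    have hcondY : μ[x (k + 1)|GY η x k] =ᵐ[μ] fun ω => S.A *ᵥ (μ[x k|GY η x k]) ω + S.BL *ᵥ (μ[uL k|GY η x k]) ω + S.BR *ᵥ uR k ω := by
      rw [hxsucc]
      have h1 := condExp_add (μ := μ) (m := GY η x k)
        (f := fun ω => S.A *ᵥ x k ω + S.BL *ᵥ uL k ω + S.BR *ᵥ uR k ω) (g := w k) hdrift_i hwi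
      refine h1.trans ?_
      filter_upwards [hcondY3, hw0 (GY η x k) (hYleH k)] with ω h2 hω
      simp only [Pi.add_apply, h2, hω, Pi.zero_apply, add_zero]
    -- the filtering identity
    have hm1 : Hk x0 w η k ≤ Hk x0 w η k ⊔ MeasurableSpace.comap (w k)
        (inferInstance : MeasurableSpace (Fin n → ℝ)) := le_sup_left
    have hm2 : MeasurableSpace.comap (w k) (inferInstance : MeasurableSpace (Fin n → ℝ))
        ≤ Hk x0 w η k ⊔ MeasurableSpace.comap (w k)
          (inferInstance : MeasurableSpace (Fin n → ℝ)) := le_sup_right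
    have hxG : Measurable[Hk x0 w η k ⊔ MeasurableSpace.comap (w k)
        (inferInstance : MeasurableSpace (Fin n → ℝ))] (x (k + 1)) := by
      rw [hxsucc]
      exact (((measurable_mulVec_comp S.A ((hxHk k).mono hm1 le_rfl)).add
        (measurable_mulVec_comp S.BL ((huLmeas k).measurable.mono
          (le_trans (hFleH k) hm1) le_rfl))).add
        (measurable_mulVec_comp S.BR ((huRmeas k).measurable.mono
          (le_trans (hYleH k) hm1) le_rfl))).add
        (Measurable.of_comap_le hm2)
    have hfilt := filtering (μ := μ) k (hYle (k + 1)) (hYle k)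
      (le_trans (hYleH k) hm1) hxG (hmη (k + 1)) (hη01 (k + 1))
      (indep_eta_HkW hmx0 hmw hmη hindep k) (hxi (k + 1))
    -- pointwise error representation
    have hxt1 : x (k + 1) - μ[x (k + 1)|GY η x (k + 1)] =ᵐ[μ]
        fun ω => (1 - η (k + 1) ω) • ((x (k + 1) - μ[x (k + 1)|GY η x k]) ω) := by
      filter_upwards [hfilt] with ω hω
      simp only [Pi.sub_apply]
      rw [hω]
      rcases hη01 (k + 1) ω with h | h <;> simp [h]
    -- E[1 - η]
    have hηint : Integrable (η (k + 1)) μ :=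
      (memLp_top_of_bound (hmη (k + 1)).aestronglyMeasurable 1
        (Filter.Eventually.of_forall fun ω => by
          rcases hη01 (k + 1) ω with h | h <;> simp [h, Real.norm_eq_abs])).integrable le_top
    have hIξ : (∫ ω, (1 - η (k + 1) ω) ∂μ) = S.p := by
      rw [integral_sub (integrable_const 1) hηint, integral_const]
      have h1 : ∫ ω, η (k + 1) ω ∂μ = 1 - S.p :=
        integral_of_indicator01 (hmη (k + 1)) (hη01 (k + 1)) (by linarith) (hη1 (k + 1))
      rw [h1]
      simp [measure_univ]
    -- E[x(k+1) - x̂_{k+1|k+1} | F_k]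
    have h3 : μ[x (k + 1) - μ[x (k + 1)|GY η x k]|Fk x0 w η x k] =ᵐ[μ]
        fun ω => (S.A *ᵥ x k ω + S.BL *ᵥ uL k ω + S.BR *ᵥ uR k ω) - (S.A *ᵥ (μ[x k|GY η x k]) ω + S.BL *ᵥ (μ[uL k|GY η x k]) ω + S.BR *ᵥ uR k ω) := by
      have h3a := condExp_sub (μ := μ) (m := Fk x0 w η x k) (f := x (k + 1)) (g := μ[x (k + 1)|GY η x k])
        (hxi (k + 1)) integrable_condExp
      refine h3a.trans ?_
      have hxpF : μ[μ[x (k + 1)|GY η x k]|Fk x0 w η x k] = μ[x (k + 1)|GY η x k] :=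
        condExp_of_stronglyMeasurable (hFle k)
          (stronglyMeasurable_condExp.mono (GY_le_Fk k)) integrable_condExp
      filter_upwards [hcondF, hcondY] with ω e1 e2
      simp only [Pi.sub_apply, hxpF, e1]
      rw [e2]
    have hdiffF : μ[x (k + 1) - μ[x (k + 1)|GY η x (k + 1)]|Fk x0 w η x k] =ᵐ[μ]
        fun ω => S.p • ((S.A *ᵥ x k ω + S.BL *ᵥ uL k ω + S.BR *ᵥ uR k ω) - (S.A *ᵥ (μ[x k|GY η x k]) ω + S.BL *ᵥ (μ[uL k|GY η x k]) ω + S.BR *ᵥ uR k ω)) := by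
      refine (condExp_congr_ae hxt1).trans ?_
      have h2 := condexp_indep_smul (μ := μ) (m := Fk x0 w η x k)
        (mG := Hk x0 w η k ⊔ MeasurableSpace.comap (w k)
          (inferInstance : MeasurableSpace (Fin n → ℝ)))
        (ξ := fun ω => 1 - η (k + 1) ω) (v := x (k + 1) - μ[x (k + 1)|GY η x k])
        (hFle k) (le_trans (hFleH k) hm1)
        (measurable_const.sub (hmη (k + 1)))
        (indep_mono (indep_eta_HkW hmx0 hmw hmη hindep k)
          (Measurable.comap_le (measurable_const.sub (Measurable.of_comap_le le_rfl)))
          le_rfl)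
        (fun ω => by rcases hη01 (k + 1) ω with h | h <;> simp [h])
        (hxG.sub ((stronglyMeasurable_condExp.mono
          (le_trans (hYleH k) hm1)).measurable))
        ((hxi (k + 1)).sub integrable_condExp)
      refine h2.trans ?_
      filter_upwards [h3] with ω hω
      rw [hω, hIξ]
    -- decomposition of lam (k+1)
    have hlamsucc : lam (k + 1) = fun ω => Z' *ᵥ x (k + 1) ω
        + (X' - Z') *ᵥ ((x (k + 1) - μ[x (k + 1)|GY η x (k + 1)]) ω) := by
      funext ω
      rw [hlam (k + 1) ω, hNk1]
      simp only [Pi.sub_apply, Matrix.sub_mulVec, Matrix.mulVec_sub]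
      abel
    have hlamint : Integrable (lam (k + 1)) μ := by
      rw [hlamsucc]
      exact (integrable_mulVec Z' (hxi (k + 1))).add
        (integrable_mulVec (X' - Z') ((hxi (k + 1)).sub integrable_condExp))
    -- E[lam (k+1) | F_k]
    have hcondlamF : μ[lam (k + 1)|Fk x0 w η x k] =ᵐ[μ] fun ω => Z' *ᵥ (S.A *ᵥ x k ω + S.BL *ᵥ uL k ω + S.BR *ᵥ uR k ω) + S.p • ((X' - Z') *ᵥ ((S.A *ᵥ x k ω + S.BL *ᵥ uL k ω + S.BR *ᵥ uR k ω) - (S.A *ᵥ (μ[x k|GY η x k]) ω + S.BL *ᵥ (μ[uL k|GY η x k]) ω + S.BR *ᵥ uR k ω))) := by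
      rw [hlamsucc]
      have h1 := condExp_add (μ := μ) (m := Fk x0 w η x k)
        (f := fun ω => Z' *ᵥ x (k + 1) ω)
        (g := fun ω => (X' - Z') *ᵥ ((x (k + 1) - μ[x (k + 1)|GY η x (k + 1)]) ω))
        (integrable_mulVec Z' (hxi (k + 1)))
        (integrable_mulVec (X' - Z') ((hxi (k + 1)).sub integrable_condExp))
      refine h1.trans ?_
      have h2 := condexp_mulVec (hFle k) Z' (hxi (k + 1))
      have hsub_i : Integrable (x (k + 1) - μ[x (k + 1)|GY η x (k + 1)]) μ :=
        (hxi (k + 1)).sub integrable_condExp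
      have h4 := condexp_mulVec (hFle k) (X' - Z') hsub_i
      filter_upwards [h2, h4, hcondF, hdiffF] with ω e2 e4 eF eD
      simp only [Pi.add_apply]
      rw [e2, e4, eF, eD, Matrix.mulVec_smul]
    -- E[lam (k+1) | Y_k]
    have hcondlamY : μ[lam (k + 1)|GY η x k] =ᵐ[μ]
        fun ω => Z' *ᵥ (S.A *ᵥ (μ[x k|GY η x k]) ω + S.BL *ᵥ (μ[uL k|GY η x k]) ω + S.BR *ᵥ uR k ω) := by
      have htower := condExp_condExp_of_le (μ := μ) (f := lam (k + 1))
        (GY_le_Fk k) (hFle k)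
      refine (htower.symm.trans (condExp_congr_ae hcondlamF)).trans ?_
      have h1 := condExp_add (μ := μ) (m := GY η x k)
        (f := fun ω => Z' *ᵥ (S.A *ᵥ x k ω + S.BL *ᵥ uL k ω + S.BR *ᵥ uR k ω))
        (g := fun ω => S.p • ((X' - Z') *ᵥ ((S.A *ᵥ x k ω + S.BL *ᵥ uL k ω + S.BR *ᵥ uR k ω) - (S.A *ᵥ (μ[x k|GY η x k]) ω + S.BL *ᵥ (μ[uL k|GY η x k]) ω + S.BR *ᵥ uR k ω))))
        (integrable_mulVec Z' hdrift_i)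
        (Integrable.smul S.p (integrable_mulVec (X' - Z') (hdrift_i.sub hdriftY_i)))
      refine h1.trans ?_
      have h2 := condexp_mulVec (hYle k) Z' hdrift_i
      have hdiffYi : Integrable (fun ω => (S.A *ᵥ x k ω + S.BL *ᵥ uL k ω + S.BR *ᵥ uR k ω) - (S.A *ᵥ (μ[x k|GY η x k]) ω + S.BL *ᵥ (μ[uL k|GY η x k]) ω + S.BR *ᵥ uR k ω)) μ :=
        hdrift_i.sub hdriftY_i
      have h6 := condexp_mulVec (hYle k) (X' - Z') hdiffYi
      have h7 : μ[fun ω => (S.A *ᵥ x k ω + S.BL *ᵥ uL k ω + S.BR *ᵥ uR k ω) - (S.A *ᵥ (μ[x k|GY η x k]) ω + S.BL *ᵥ (μ[uL k|GY η x k]) ω + S.BR *ᵥ uR k ω)|GY η x k] =ᵐ[μ] 0 := by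
        have h7a := condExp_sub (μ := μ) (m := GY η x k) (f := fun ω => S.A *ᵥ x k ω + S.BL *ᵥ uL k ω + S.BR *ᵥ uR k ω) (g := fun ω => S.A *ᵥ (μ[x k|GY η x k]) ω + S.BL *ᵥ (μ[uL k|GY η x k]) ω + S.BR *ᵥ uR k ω)
          hdrift_i hdriftY_i
        refine EventuallyEq.trans (by exact h7a) ?_
        have h7b : μ[fun ω => S.A *ᵥ (μ[x k|GY η x k]) ω + S.BL *ᵥ (μ[uL k|GY η x k]) ω + S.BR *ᵥ uR k ω|GY η x k] = fun ω => S.A *ᵥ (μ[x k|GY η x k]) ω + S.BL *ᵥ (μ[uL k|GY η x k]) ω + S.BR *ᵥ uR k ω :=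
          condExp_of_stronglyMeasurable (hYle k) hdriftYSM hdriftY_i
        filter_upwards [hcondY3] with ω e1
        simp only [Pi.sub_apply, h7b, e1, Pi.zero_apply, sub_self]
      have hterm2 : μ[(fun ω => S.p • ((X' - Z') *ᵥ ((S.A *ᵥ x k ω + S.BL *ᵥ uL k ω + S.BR *ᵥ uR k ω) - (S.A *ᵥ (μ[x k|GY η x k]) ω + S.BL *ᵥ (μ[uL k|GY η x k]) ω + S.BR *ᵥ uR k ω))))|GY η x k]
          =ᵐ[μ] 0 := by
        have h5 := condExp_smul (μ := μ) (m := GY η x k) S.p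
          (fun ω => (X' - Z') *ᵥ ((S.A *ᵥ x k ω + S.BL *ᵥ uL k ω + S.BR *ᵥ uR k ω) - (S.A *ᵥ (μ[x k|GY η x k]) ω + S.BL *ᵥ (μ[uL k|GY η x k]) ω + S.BR *ᵥ uR k ω)))
        refine EventuallyEq.trans (by exact h5) ?_
        filter_upwards [h6, h7] with ω e6 e7
        simp only [Pi.smul_apply]
        rw [e6, e7]
        simp
      filter_upwards [h2, hterm2, hcondY3] with ω e2 e5 e3
      simp only [Pi.add_apply]
      rw [e2, e3, e5]
      simp
    -- processed stationarity conditions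
    have hBl := condexp_mulVec (hFle k) S.BLᵀ hlamint
    have hL : ∀ᵐ ω ∂μ, S.BLᵀ *ᵥ (Z' *ᵥ (S.A *ᵥ x k ω + S.BL *ᵥ uL k ω + S.BR *ᵥ uR k ω)
          + S.p • ((X' - Z') *ᵥ ((S.A *ᵥ x k ω + S.BL *ᵥ uL k ω + S.BR *ᵥ uR k ω) - (S.A *ᵥ (μ[x k|GY η x k]) ω + S.BL *ᵥ (μ[uL k|GY η x k]) ω + S.BR *ᵥ uR k ω))))
        + S.RL *ᵥ uL k ω = 0 := by
      filter_upwards [hstatL k hk, hBl, hcondlamF] with ω e0 e1 e2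
      have e0' : (μ[fun ω' => S.BLᵀ *ᵥ lam (k + 1) ω'|Fk x0 w η x k]) ω + S.RL *ᵥ uL k ω = 0 := e0
      rw [e1, e2] at e0'
      exact e0'
    have hR : ∀ᵐ ω ∂μ, S.BRᵀ *ᵥ (Z' *ᵥ (S.A *ᵥ (μ[x k|GY η x k]) ω + S.BL *ᵥ (μ[uL k|GY η x k]) ω + S.BR *ᵥ uR k ω)) + S.RR *ᵥ uR k ω = 0 := by
      have hBr := condexp_mulVec (hYle k) S.BRᵀ hlamint
      filter_upwards [hstatR k hk, hBr, hcondlamY] with ω e0 e1 e2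
      have e0' : (μ[fun ω' => S.BRᵀ *ᵥ lam (k + 1) ω'|GY η x k]) ω + S.RR *ᵥ uR k ω = 0 := e0
      rw [e1, e2] at e0'
      exact e0'
    have hLy : ∀ᵐ ω ∂μ, S.BLᵀ *ᵥ (Z' *ᵥ (S.A *ᵥ (μ[x k|GY η x k]) ω + S.BL *ᵥ (μ[uL k|GY η x k]) ω + S.BR *ᵥ uR k ω))
        + S.RL *ᵥ (μ[uL k|GY η x k]) ω = 0 := by
      have hsplit := condExp_add (μ := μ) (m := GY η x k)
        (f := μ[fun ω' => S.BLᵀ *ᵥ lam (k + 1) ω'|Fk x0 w η x k])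
        (g := fun ω => S.RL *ᵥ uL k ω) integrable_condExp (integrable_mulVec S.RL huLi)
      have htowerL := condExp_condExp_of_le (μ := μ)
        (f := fun ω' => S.BLᵀ *ᵥ lam (k + 1) ω') (GY_le_Fk k) (hFle k)
      have hmAL := condexp_mulVec (hYle k) S.BLᵀ hlamint
      have hmRL := condexp_mulVec (hYle k) S.RL huLi
      have h0Y : μ[(fun ω => (μ[fun ω' => S.BLᵀ *ᵥ lam (k + 1) ω'|Fk x0 w η x k]) ω
          + S.RL *ᵥ uL k ω)|GY η x k] =ᵐ[μ] 0 := by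
        refine (condExp_congr_ae (hstatL k hk)).trans ?_
        rw [condExp_zero]
      have hcomb := hsplit.symm.trans h0Y
      filter_upwards [hcomb, htowerL, hmAL, hmRL, hcondlamY] with ω e0 e1 e2 e3 e4
      have e0' : (μ[μ[fun ω' => S.BLᵀ *ᵥ lam (k + 1) ω'|Fk x0 w η x k]|GY η x k]) ω
          + (μ[fun ω => S.RL *ᵥ uL k ω|GY η x k]) ω = 0 := e0
      rw [e1, e2, e4, e3] at e0'
      exact e0'
    -- final assembly
    have hAl := condexp_mulVec (hFle k) S.Aᵀ hlamint
    filter_upwards [hAl, hcondlamF, hL, hLy, hR] with ω eA eC eL eLy eR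
    rw [hlam k ω, hNk2, eA, eC]
    have hZX : S.ZX P (N - k + 1)
        = (S.Zstep Z', S.Xstep (S.Psi Z' X')) := rfl
    rw [hZX]
    exact S.key_algebra Z' X' hZs hPsis (transpose_eq_of_posSemidef hRLpsd)
      (transpose_eq_of_posSemidef hRRpsd) hUdet hLdet (x k ω) ((μ[x k|GY η x k]) ω)
      (uL k ω) ((μ[uL k|GY η x k]) ω) (uR k ω) eL eLy eR
  · refine Filter.Eventually.of_forall fun ω => ?_
    rw [hlam (N + 1) ω, Nat.sub_self]
    show P *ᵥ _ + P *ᵥ _ = _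
    rw [Matrix.mulVec_sub]
    abel

end NCS0
end
end

section
/- Let F be an n×n real matrix, 0 < p < 1, and Q_ω an n×n symmetric positive definite matrix. If √p·ρ(F) < 1, where ρ(F) is the spectral radius of F (the largest absolute value of its complex eigenvalues), then for every positive semi-definite initial matrix Σ_0 the sequence defined by Σ_k = p F Σ_{k−1} F′ + p Q_ω converges, as k → ∞, to the matrix P = Σ_{i=1}^{∞} p^i F^{i−1} Q_ω (F′)^{i−1}, which is positive definite and is the unique solution of the Stein equation P = p F P F′ + p Q_ω. -/
open Matrix Filter Topology
open scoped NNReal ENNReal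

section aux

attribute [local instance] Matrix.linftyOpNormedAddCommGroup Matrix.linftyOpNormedSpace
  Matrix.linftyOpNormedRing Matrix.linftyOpNormedAlgebra

variable {n : ℕ}

lemma aux_decay (A : Matrix (Fin n) (Fin n) ℂ)
    (h : ∀ z ∈ spectrum ℂ A, ‖z‖ < 1) :
    ∃ r : ℝ, 0 < r ∧ r < 1 ∧ ∀ᶠ k in atTop, ‖A ^ k‖ ≤ r ^ k := by
  rcases Nat.eq_zero_or_pos n with hn | hn
  · refine ⟨1/2, by norm_num, by norm_num, ?_⟩
    subst hn
    filter_upwards with k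
    have hA : A ^ k = 0 := Subsingleton.elim _ _
    rw [hA, norm_zero]
    positivity
  · haveI : Nonempty (Fin n) := ⟨⟨0, hn⟩⟩
    have hρ : spectralRadius ℂ A < 1 := by
      have := spectrum.spectralRadius_lt_of_forall_lt (a := A) (r := 1)
        (fun z hz => by simpa [← NNReal.coe_lt_coe] using h z hz)
      simpa using this
    obtain ⟨r, hr1, hr2⟩ := ENNReal.lt_iff_exists_nnreal_btwn.mp hρ
    set r' : ℝ≥0 := max r (1/2) with hr'
    have hr'1 : (r' : ℝ≥0∞) < 1 := by
      rw [hr']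
      push_cast
      exact max_lt hr2 (by norm_num)
    have hρr' : spectralRadius ℂ A < (r' : ℝ≥0∞) := hr1.trans_le (by exact_mod_cast le_max_left _ _)
    have hev := (spectrum.pow_nnnorm_pow_one_div_tendsto_nhds_spectralRadius A).eventually_lt_const hρr'
    refine ⟨(r' : ℝ), by positivity, by exact_mod_cast hr'1, ?_⟩
    filter_upwards [hev, eventually_ge_atTop 1] with k hk hk1
    have hkne : (k : ℝ) ≠ 0 := by positivity
    have : (‖A ^ k‖₊ : ℝ≥0∞) ≤ (r' : ℝ≥0∞) ^ k := by
      have h1 : ((‖A ^ k‖₊ : ℝ≥0∞) ^ (1 / (k : ℝ))) ^ (k : ℕ) ≤ (r' : ℝ≥0∞) ^ k :=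
        pow_le_pow_left₀ zero_le hk.le k
      rwa [← ENNReal.rpow_natCast (_ ^ _) k, ← ENNReal.rpow_mul,
        one_div_mul_cancel hkne, ENNReal.rpow_one] at h1
    have : ‖A ^ k‖₊ ≤ r' ^ k := ENNReal.coe_le_coe.mp (by rwa [← ENNReal.coe_pow] at this)
    calc ‖A ^ k‖ = ((‖A ^ k‖₊ : ℝ≥0) : ℝ) := rfl
      _ ≤ ((r' ^ k : ℝ≥0) : ℝ) := by exact_mod_cast this
      _ = (r' : ℝ) ^ k := by push_cast; ring


lemma aux_nnnorm_entry_le (A : Matrix (Fin n) (Fin n) ℝ) (i j : Fin n) : ‖A i j‖₊ ≤ ‖A‖₊ := by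
  rw [Matrix.linfty_opNNNorm_def]
  exact le_trans (Finset.single_le_sum (f := fun j => ‖A i j‖₊) (fun _ _ => zero_le)
    (Finset.mem_univ j)) (Finset.le_sup (f := fun i => ∑ j, ‖A i j‖₊) (Finset.mem_univ i))

lemma aux_norm_transpose_le (A : Matrix (Fin n) (Fin n) ℝ) : ‖Aᵀ‖ ≤ n * ‖A‖ := by
  have : ‖Aᵀ‖₊ ≤ n • ‖A‖₊ := by
    rw [Matrix.linfty_opNNNorm_def (A := Aᵀ)]
    refine Finset.sup_le fun j _ => ?_
    calc ∑ i, ‖Aᵀ j i‖₊ ≤ ∑ _i : Fin n, ‖A‖₊ :=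
          Finset.sum_le_sum fun i _ => aux_nnnorm_entry_le A i j
      _ = n • ‖A‖₊ := by simp [Finset.sum_const]
  calc ‖Aᵀ‖ = ((‖Aᵀ‖₊ : ℝ≥0) : ℝ) := rfl
    _ ≤ ((n • ‖A‖₊ : ℝ≥0) : ℝ) := by exact_mod_cast this
    _ = n * ‖A‖ := by push_cast; ring

lemma aux_norm_map (A : Matrix (Fin n) (Fin n) ℝ) : ‖A.map (algebraMap ℝ ℂ)‖ = ‖A‖ := by
  have : ‖A.map (algebraMap ℝ ℂ)‖₊ = ‖A‖₊ := by
    rw [Matrix.linfty_opNNNorm_def, Matrix.linfty_opNNNorm_def]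
    congr 1
    ext i
    simp [Matrix.map_apply, Complex.nnnorm_real]
  exact congrArg NNReal.toReal this

lemma aux_decay_real (F : Matrix (Fin n) (Fin n) ℝ) (p : ℝ) (hp0 : 0 < p)
    (hspec : ∀ z ∈ spectrum ℂ (F.map (algebraMap ℝ ℂ)), Real.sqrt p * ‖z‖ < 1) :
    ∃ r : ℝ, 0 < r ∧ r < 1 ∧ ∀ᶠ k in atTop, Real.sqrt p ^ k * ‖F ^ k‖ ≤ r ^ k := by
  have hsq : (0:ℝ) < Real.sqrt p := Real.sqrt_pos.mpr hp0
  set c : ℂ := (Real.sqrt p : ℂ) with hc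
  have hc0 : c ≠ 0 := by
    simp only [hc, ne_eq, Complex.ofReal_eq_zero]
    exact hsq.ne'
  set G : Matrix (Fin n) (Fin n) ℂ := c • F.map (algebraMap ℝ ℂ) with hG
  have hGspec : ∀ z ∈ spectrum ℂ G, ‖z‖ < 1 := by
    intro z hz
    rw [hG] at hz
    rw [show c • F.map (algebraMap ℝ ℂ) = (Units.mk0 c hc0) • F.map (algebraMap ℝ ℂ) from rfl,
      spectrum.unit_smul_eq_smul] at hz
    obtain ⟨w, hw, rfl⟩ := hz
    have := hspec w hw
    calc ‖(Units.mk0 c hc0) • w‖ = ‖c * w‖ := rfl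
      _ = Real.sqrt p * ‖w‖ := by
          rw [norm_mul, hc, Complex.norm_real, Real.norm_eq_abs,
            abs_of_nonneg (Real.sqrt_nonneg p)]
      _ < 1 := this
  obtain ⟨r, hr0, hr1, hev⟩ := aux_decay G hGspec
  refine ⟨r, hr0, hr1, ?_⟩
  filter_upwards [hev] with k hk
  have hGk : G ^ k = (c ^ k) • (F ^ k).map (algebraMap ℝ ℂ) := by
    rw [hG, smul_pow]
    congr 1
    exact (map_pow (algebraMap ℝ ℂ).mapMatrix F k).symm
  rw [hGk, norm_smul] at hk
  have hnc : ‖c ^ k‖ = Real.sqrt p ^ k := by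
    rw [norm_pow, hc, Complex.norm_real, Real.norm_eq_abs, abs_of_nonneg (Real.sqrt_nonneg p)]
  rw [hnc, aux_norm_map] at hk
  exact hk


lemma aux_posSemidef_smul {A : Matrix (Fin n) (Fin n) ℝ} (hA : A.PosSemidef) {c : ℝ}
    (hc : 0 ≤ c) : (c • A).PosSemidef := by
  rw [posSemidef_iff_dotProduct_mulVec]
  constructor
  · show (c • A)ᴴ = c • A
    rw [conjTranspose_smul, hA.1.eq]
    simp
  · intro x
    rw [smul_mulVec, dotProduct_smul, smul_eq_mul]
    exact mul_nonneg hc (hA.dotProduct_mulVec_nonneg x)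

lemma aux_posDef_smul {A : Matrix (Fin n) (Fin n) ℝ} (hA : A.PosDef) {c : ℝ}
    (hc : 0 < c) : (c • A).PosDef := by
  rw [posDef_iff_dotProduct_mulVec]
  constructor
  · show (c • A)ᴴ = c • A
    rw [conjTranspose_smul, hA.1.eq]
    simp
  · intro x hx
    rw [smul_mulVec, dotProduct_smul, smul_eq_mul]
    exact mul_pos hc (hA.dotProduct_mulVec_pos hx)

lemma aux_posSemidef_of_tendsto {f : ℕ → Matrix (Fin n) (Fin n) ℝ} {M : Matrix (Fin n) (Fin n) ℝ}
    (hf : ∀ k, (f k).PosSemidef) (h : Tendsto f atTop (𝓝 M)) : M.PosSemidef := by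
  have happ : ∀ i j, Tendsto (fun k => f k i j) atTop (𝓝 (M i j)) := by
    intro i j
    exact (((continuous_apply j).comp (continuous_apply i)).tendsto M).comp h
  rw [posSemidef_iff_dotProduct_mulVec]
  constructor
  · show Mᴴ = M
    ext i j
    show star (M j i) = M i j
    rw [star_trivial]
    refine tendsto_nhds_unique ?_ (happ i j)
    refine (happ j i).congr fun k => ?_
    have := (hf k).1
    calc f k j i = ((f k)ᴴ) i j := by simp [conjTranspose_apply]
      _ = f k i j := by rw [this]
  · intro x
    have htend : Tendsto (fun k => star x ⬝ᵥ (f k) *ᵥ x) atTop (𝓝 (star x ⬝ᵥ M *ᵥ x)) := by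
      simp only [dotProduct, mulVec]
      refine tendsto_finset_sum _ fun i _ => ?_
      exact tendsto_const_nhds.mul (tendsto_finset_sum _ fun j _ => (happ i j).mul tendsto_const_nhds)
    exact ge_of_tendsto htend (Eventually.of_forall fun k => (hf k).dotProduct_mulVec_nonneg x)


/-- If `√p · ρ(F) < 1` (every complex eigenvalue `z` of `F` satisfies
`√p · |z| < 1`), `0 < p < 1` and `Q_ω` is symmetric positive definite, then for every
positive semidefinite initial matrix `Σ₀` the sequence `Σ_k = p F Σ_{k-1} F′ + p Q_ω`
converges to `P = ∑_{i=1}^∞ p^i F^{i-1} Q_ω (F′)^{i-1}`, which is positive definite and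
is the unique solution of the Stein equation `P = p F P F′ + p Q_ω`. -/
theorem covariance_recursion_converges {n : ℕ}
    (F Qw : Matrix (Fin n) (Fin n) ℝ) (p : ℝ)
    (hp0 : 0 < p) (hp1 : p < 1)
    (hQw : Qw.PosDef)
    (hspec : ∀ z ∈ spectrum ℂ (F.map (algebraMap ℝ ℂ)), Real.sqrt p * ‖z‖ < 1) :
    ∃ P : Matrix (Fin n) (Fin n) ℝ,
      P = (∑' i : ℕ, p ^ (i + 1) • (F ^ i * Qw * Fᵀ ^ i)) ∧
      P.PosDef ∧
      P = p • (F * P * Fᵀ) + p • Qw ∧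
      (∀ P' : Matrix (Fin n) (Fin n) ℝ, P' = p • (F * P' * Fᵀ) + p • Qw → P' = P) ∧
      (∀ S0 : Matrix (Fin n) (Fin n) ℝ, S0.PosSemidef →
        ∀ Sg : ℕ → Matrix (Fin n) (Fin n) ℝ, Sg 0 = S0 →
          (∀ k : ℕ, Sg (k + 1) = p • (F * Sg k * Fᵀ) + p • Qw) →
          Tendsto Sg atTop (𝓝 P)) := by
  obtain ⟨r, hr0, hr1, hev⟩ := aux_decay_real F p hp0 hspec
  have hr2 : r ^ 2 < 1 := by nlinarith
  set a : ℕ → Matrix (Fin n) (Fin n) ℝ := fun i => p ^ (i + 1) • (F ^ i * Qw * Fᵀ ^ i) with ha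
  have hFt : ∀ i : ℕ, (Fᵀ) ^ i = (F ^ i)ᵀ := fun i => (transpose_pow F i).symm
  -- uniform eventual bound for congruence terms
  have hbnd : ∀ (M : Matrix (Fin n) (Fin n) ℝ), ∀ᶠ k in atTop,
      ‖p ^ k • (F ^ k * M * (F ^ k)ᵀ)‖ ≤ ((n : ℝ) * ‖M‖) * (r ^ 2) ^ k := by
    intro M
    filter_upwards [hev] with k hk
    have h1 : ‖F ^ k * M * (F ^ k)ᵀ‖ ≤ ‖F ^ k‖ * ‖M‖ * ‖(F ^ k)ᵀ‖ :=
      le_trans (norm_mul_le _ _) (by gcongr; exact norm_mul_le _ _)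
    have h2 : ‖(F ^ k)ᵀ‖ ≤ (n : ℝ) * ‖F ^ k‖ := aux_norm_transpose_le _
    have hpk : p ^ k = Real.sqrt p ^ k * Real.sqrt p ^ k := by
      rw [← mul_pow, Real.mul_self_sqrt hp0.le]
    have h3 : ‖p ^ k • (F ^ k * M * (F ^ k)ᵀ)‖ = p ^ k * ‖F ^ k * M * (F ^ k)ᵀ‖ := by
      rw [norm_smul, Real.norm_eq_abs, abs_of_nonneg (by positivity)]
    rw [h3, hpk]
    have hrk : (r ^ 2) ^ k = (r ^ k) * (r ^ k) := by ring
    rw [hrk]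
    have hf0 : (0:ℝ) ≤ ‖F ^ k‖ := norm_nonneg _
    have hs0 : (0:ℝ) ≤ Real.sqrt p ^ k := by positivity
    have hM0 : (0:ℝ) ≤ ‖M‖ := norm_nonneg _
    have h4 : Real.sqrt p ^ k * Real.sqrt p ^ k * (‖F ^ k‖ * ‖M‖ * ((n:ℝ) * ‖F ^ k‖))
        = (n:ℝ) * ‖M‖ * ((Real.sqrt p ^ k * ‖F ^ k‖) * (Real.sqrt p ^ k * ‖F ^ k‖)) := by ring
    calc Real.sqrt p ^ k * Real.sqrt p ^ k * ‖F ^ k * M * (F ^ k)ᵀ‖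
        ≤ Real.sqrt p ^ k * Real.sqrt p ^ k * (‖F ^ k‖ * ‖M‖ * ((n:ℝ) * ‖F ^ k‖)) := by
          refine mul_le_mul_of_nonneg_left ?_ (by positivity)
          exact le_trans h1 (by gcongr)
      _ = (n:ℝ) * ‖M‖ * ((Real.sqrt p ^ k * ‖F ^ k‖) * (Real.sqrt p ^ k * ‖F ^ k‖)) := h4
      _ ≤ (n:ℝ) * ‖M‖ * ((r ^ k) * (r ^ k)) := by
          refine mul_le_mul_of_nonneg_left ?_ (by positivity)
          exact mul_le_mul hk hk (by positivity) (by positivity)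
  -- summability
  have hsum : Summable a := by
    refine Summable.of_norm_bounded_eventually_nat
      (g := fun k => (p * ((n : ℝ) * ‖Qw‖)) * (r ^ 2) ^ k)
      (((summable_geometric_of_lt_one (by positivity) hr2).mul_left _)) ?_
    filter_upwards [hbnd Qw] with k hk
    have : a k = p • (p ^ k • (F ^ k * Qw * (F ^ k)ᵀ)) := by
      rw [ha]
      simp only [smul_smul, ← pow_succ']
      rw [hFt]
    rw [this, norm_smul, Real.norm_eq_abs, abs_of_nonneg hp0.le]
    calc p * ‖p ^ k • (F ^ k * Qw * (F ^ k)ᵀ)‖ ≤ p * (((n : ℝ) * ‖Qw‖) * (r ^ 2) ^ k) :=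
          mul_le_mul_of_nonneg_left hk hp0.le
      _ = (p * ((n : ℝ) * ‖Qw‖)) * (r ^ 2) ^ k := by ring
  set P : Matrix (Fin n) (Fin n) ℝ := ∑' i, a i with hP
  -- the Lyapunov operator
  set L : Matrix (Fin n) (Fin n) ℝ →ₗ[ℝ] Matrix (Fin n) (Fin n) ℝ :=
    { toFun := fun M => p • (F * M * Fᵀ)
      map_add' := fun X Y => by
        simp only [Matrix.mul_add, Matrix.add_mul, smul_add]
      map_smul' := fun c X => by
        simp only [RingHom.id_apply, Matrix.mul_smul, Matrix.smul_mul]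
        rw [smul_comm] } with hL
  have hLcont : Continuous L := L.continuous_of_finiteDimensional
  have hLapp : ∀ M, L M = p • (F * M * Fᵀ) := fun M => rfl
  have hLpow : ∀ (M : Matrix (Fin n) (Fin n) ℝ) (k : ℕ),
      L (p ^ k • (F ^ k * M * Fᵀ ^ k)) = p ^ (k + 1) • (F ^ (k + 1) * M * Fᵀ ^ (k + 1)) := by
    intro M k
    rw [hLapp, Matrix.mul_smul, Matrix.smul_mul, smul_smul]
    congr 1
    · ring
    · rw [pow_succ' F, pow_succ Fᵀ]
      simp only [mul_assoc]
  have hLa : ∀ i, L (a i) = a (i + 1) := by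
    intro i
    have h1 : a i = p • (p ^ i • (F ^ i * Qw * Fᵀ ^ i)) := by
      rw [ha]; simp only [smul_smul, ← pow_succ']
    have h2 : a (i + 1) = p • (p ^ (i+1) • (F ^ (i+1) * Qw * Fᵀ ^ (i+1))) := by
      rw [ha]; simp only [smul_smul, ← pow_succ']
    rw [h1, h2, _root_.map_smul, hLpow]
  have ha0 : a 0 = p • Qw := by
    rw [ha]; simp
  -- closed form for the recursion
  have key : ∀ (S0 : Matrix (Fin n) (Fin n) ℝ) (Sg : ℕ → Matrix (Fin n) (Fin n) ℝ),
      Sg 0 = S0 → (∀ k, Sg (k + 1) = p • (F * Sg k * Fᵀ) + p • Qw) →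
      ∀ k, Sg k = p ^ k • (F ^ k * S0 * Fᵀ ^ k) + ∑ i ∈ Finset.range k, a i := by
    intro S0 Sg h0 hrec k
    induction k with
    | zero => simpa using h0
    | succ k ih =>
      rw [hrec k, ih]
      have : p • (F * (p ^ k • (F ^ k * S0 * Fᵀ ^ k) + ∑ i ∈ Finset.range k, a i) * Fᵀ)
          = L (p ^ k • (F ^ k * S0 * Fᵀ ^ k)) + ∑ i ∈ Finset.range k, L (a i) := by
        rw [← map_sum, ← map_add]
        rfl
      rw [this, hLpow, ← ha0]
      simp only [hLa]
      rw [add_assoc, ← Finset.sum_range_succ' a k]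
  -- the transient term vanishes
  have hzero : ∀ M : Matrix (Fin n) (Fin n) ℝ,
      Tendsto (fun k => p ^ k • (F ^ k * M * Fᵀ ^ k)) atTop (𝓝 0) := by
    intro M
    refine squeeze_zero_norm' (a := fun k => ((n : ℝ) * ‖M‖) * (r ^ 2) ^ k) ?_ ?_
    · filter_upwards [hbnd M] with k hk
      rw [hFt]
      exact hk
    · have := (tendsto_pow_atTop_nhds_zero_of_lt_one (by positivity) hr2).const_mul
        ((n : ℝ) * ‖M‖)
      simpa using this
  -- convergence of the recursion
  have htendsto : ∀ (S0 : Matrix (Fin n) (Fin n) ℝ) (Sg : ℕ → Matrix (Fin n) (Fin n) ℝ),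
      Sg 0 = S0 → (∀ k, Sg (k + 1) = p • (F * Sg k * Fᵀ) + p • Qw) →
      Tendsto Sg atTop (𝓝 P) := by
    intro S0 Sg h0 hrec
    have hSg := key S0 Sg h0 hrec
    have h1 : Tendsto (fun k => p ^ k • (F ^ k * S0 * Fᵀ ^ k) + ∑ i ∈ Finset.range k, a i)
        atTop (𝓝 (0 + P)) := (hzero S0).add hsum.hasSum.tendsto_sum_nat
    rw [zero_add] at h1
    exact h1.congr fun k => (hSg k).symm
  -- the Stein equation
  have hstein : P = p • (F * P * Fᵀ) + p • Qw := by
    have h1 : p • (F * P * Fᵀ) = ∑' i, a (i + 1) := by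
      have h2 : HasSum (fun i => L (a i)) (L P) := hsum.hasSum.map L hLcont
      have h3 : ∑' i, L (a i) = L P := h2.tsum_eq
      calc p • (F * P * Fᵀ) = L P := rfl
        _ = ∑' i, L (a i) := h3.symm
        _ = ∑' i, a (i + 1) := by simp only [hLa]
    rw [h1, ← ha0]
    exact (Summable.tsum_eq_zero_add hsum).trans (add_comm _ _)
  -- uniqueness
  have huniq : ∀ P' : Matrix (Fin n) (Fin n) ℝ,
      P' = p • (F * P' * Fᵀ) + p • Qw → P' = P := by
    intro P' hP'
    have hD : P' - P = L (P' - P) := by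
      rw [map_sub, hLapp, hLapp]
      conv_lhs => rw [hP']
      conv_lhs => rw [hstein]
      abel
    have hiter : ∀ k, P' - P = p ^ k • (F ^ k * (P' - P) * Fᵀ ^ k) := by
      intro k
      induction k with
      | zero => simp
      | succ k ih =>
        calc P' - P = L (P' - P) := hD
          _ = L (p ^ k • (F ^ k * (P' - P) * Fᵀ ^ k)) := by rw [← ih]
          _ = p ^ (k + 1) • (F ^ (k + 1) * (P' - P) * Fᵀ ^ (k + 1)) := hLpow _ _
    have h1 : Tendsto (fun _ : ℕ => P' - P) atTop (𝓝 0) :=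
      (hzero (P' - P)).congr fun k => (hiter k).symm
    have h2 : P' - P = 0 := tendsto_nhds_unique tendsto_const_nhds h1
    exact sub_eq_zero.mp h2
  -- positive semidefiniteness of the terms
  have haPS : ∀ i, (a i).PosSemidef := by
    intro i
    have h1 : (F ^ i * Qw * (F ^ i)ᴴ).PosSemidef :=
      hQw.posSemidef.mul_mul_conjTranspose_same (F ^ i)
    rw [conjTranspose_eq_transpose_of_trivial] at h1
    have h2 := aux_posSemidef_smul h1 (c := p ^ (i + 1)) (by positivity)
    have h3 : a i = p ^ (i + 1) • (F ^ i * Qw * (F ^ i)ᵀ) := by simp only [ha, hFt]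
    rw [h3]
    exact h2
  -- P is positive semidefinite, hence positive definite
  have hpart : ∀ k, (∑ i ∈ Finset.range k, a i).PosSemidef := by
    intro k
    induction k with
    | zero => simpa using Matrix.PosSemidef.zero
    | succ k ih =>
      rw [Finset.sum_range_succ]
      exact ih.add (haPS k)
  have hPSD : P.PosSemidef :=
    aux_posSemidef_of_tendsto (f := fun k => ∑ i ∈ Finset.range k, a i) hpart
      hsum.hasSum.tendsto_sum_nat
  have hPD : P.PosDef := by
    rw [hstein]
    have h1 : (p • (F * P * Fᵀ)).PosSemidef := by
      have := hPSD.mul_mul_conjTranspose_same F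
      rw [conjTranspose_eq_transpose_of_trivial] at this
      exact aux_posSemidef_smul this hp0.le
    have h2 : (p • Qw).PosDef := aux_posDef_smul hQw hp0
    exact Matrix.PosDef.posSemidef_add h1 h2
  exact ⟨P, rfl, hPD, hstein, huniq, fun S0 _ Sg h0 hrec => htendsto S0 Sg h0 hrec⟩

end aux
end

section
/- Let F be an n×n real matrix, 0 < p < 1, and Q_ω an n×n symmetric positive definite matrix. If √p·ρ(F) ≥ 1, where ρ(F) is the spectral radius of F, then for any positive semi-definite initial matrix Σ_0 the sequence defined by Σ_k = p F Σ_{k−1} F′ + p Q_ω does not converge; in particular the partial sums Σ_{i=1}^{k} p^i F^{i−1} Q_ω (F′)^{i−1} are unbounded as k → ∞. -/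
open Matrix Filter Topology


lemma quad_le_trace {n : ℕ} {P : Matrix (Fin n) (Fin n) ℝ} (hP : P.PosSemidef)
    (a : Fin n → ℝ) : a ⬝ᵥ P.mulVec a ≤ P.trace * (a ⬝ᵥ a) := by
  obtain ⟨B, rfl⟩ : ∃ B : Matrix (Fin n) (Fin n) ℝ, P = Bᴴ * B := by
    open scoped MatrixOrder in
    obtain ⟨B, hB⟩ := CStarAlgebra.nonneg_iff_eq_star_mul_self.mp hP.nonneg
    exact ⟨B, hB⟩
  have h1 : a ⬝ᵥ (Bᴴ * B).mulVec a = ∑ j, (∑ i, B j i * a i) ^ 2 := by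
    rw [← Matrix.mulVec_mulVec, Matrix.dotProduct_mulVec, Matrix.conjTranspose_eq_transpose_of_trivial,
      Matrix.vecMul_transpose]
    simp [dotProduct, Matrix.mulVec, sq]
  have h2 : (Bᴴ * B).trace = ∑ j, ∑ i, B j i ^ 2 := by
    rw [Matrix.conjTranspose_eq_transpose_of_trivial]
    simp [Matrix.trace, Matrix.mul_apply, Matrix.diag, sq]
    rw [Finset.sum_comm]
  rw [h1, h2, Finset.sum_mul]
  refine Finset.sum_le_sum fun j _ => ?_
  simpa [dotProduct, sq] using Finset.sum_mul_sq_le_sq_mul_sq Finset.univ (fun i => B j i) a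

lemma trace_nonneg_of_posSemidef {n : ℕ} {P : Matrix (Fin n) (Fin n) ℝ} (hP : P.PosSemidef) :
    0 ≤ P.trace := by
  obtain ⟨B, rfl⟩ : ∃ B : Matrix (Fin n) (Fin n) ℝ, P = Bᴴ * B := by
    open scoped MatrixOrder in
    obtain ⟨B, hB⟩ := CStarAlgebra.nonneg_iff_eq_star_mul_self.mp hP.nonneg
    exact ⟨B, hB⟩
  rw [Matrix.conjTranspose_eq_transpose_of_trivial]
  simp only [Matrix.trace, Matrix.mul_apply, Matrix.diag, Matrix.transpose_apply]
  exact Finset.sum_nonneg fun i _ => Finset.sum_nonneg fun j _ => mul_self_nonneg _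

lemma re_quad {n : ℕ} (P : Matrix (Fin n) (Fin n) ℝ) (v : Fin n → ℂ) :
    (star v ⬝ᵥ (P.map (algebraMap ℝ ℂ)).mulVec v).re
      = (fun i => (v i).re) ⬝ᵥ P.mulVec (fun i => (v i).re)
        + (fun i => (v i).im) ⬝ᵥ P.mulVec (fun i => (v i).im) := by
  simp only [dotProduct, Matrix.mulVec, Pi.star_apply, Matrix.map_apply,
    Finset.mul_sum, Complex.re_sum, Finset.mul_sum]
  rw [← Finset.sum_add_distrib]
  refine Finset.sum_congr rfl fun i _ => ?_
  rw [← Finset.sum_add_distrib]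
  refine Finset.sum_congr rfl fun j _ => ?_
  simp [Complex.mul_re, Complex.mul_im]


lemma exists_eigen {n : ℕ} (M : Matrix (Fin n) (Fin n) ℂ) {z : ℂ} (hz : z ∈ spectrum ℂ M) :
    ∃ v : Fin n → ℂ, v ≠ 0 ∧ Mᵀ.mulVec v = z • v := by
  have h1 : ¬ IsUnit (algebraMap ℂ (Matrix (Fin n) (Fin n) ℂ) z - M) := spectrum.mem_iff.mp hz
  have hdet : (algebraMap ℂ (Matrix (Fin n) (Fin n) ℂ) z - M).det = 0 := by
    by_contra h
    exact h1 ((Matrix.isUnit_iff_isUnit_det _).mpr (isUnit_iff_ne_zero.mpr h))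
  have hdet' : ((algebraMap ℂ (Matrix (Fin n) (Fin n) ℂ) z - M)ᵀ).det = 0 := by
    rw [Matrix.det_transpose]; exact hdet
  obtain ⟨v, hv0, hv⟩ := (Matrix.exists_mulVec_eq_zero_iff).mpr hdet'
  refine ⟨v, hv0, ?_⟩
  rw [Matrix.transpose_sub, Matrix.sub_mulVec, sub_eq_zero] at hv
  rw [← hv, Algebra.algebraMap_eq_smul_one]
  rw [Matrix.transpose_smul, Matrix.transpose_one, Matrix.smul_mulVec, Matrix.one_mulVec]

lemma real_map_mulVec_star {n : ℕ} (R : Matrix (Fin n) (Fin n) ℝ) (v : Fin n → ℂ) :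
    (R.map (algebraMap ℝ ℂ)).mulVec (star v) = star ((R.map (algebraMap ℝ ℂ)).mulVec v) := by
  funext i
  simp only [Matrix.mulVec, dotProduct, Pi.star_apply, Matrix.map_apply]
  rw [show (star (∑ j, (algebraMap ℝ ℂ) (R i j) * v j) : ℂ)
      = ∑ j, star ((algebraMap ℝ ℂ) (R i j) * v j) from map_sum (starRingEnd ℂ) _ _]
  refine Finset.sum_congr rfl fun j _ => ?_
  simp [Complex.conj_ofReal]

lemma map_pow' {n : ℕ} (A : Matrix (Fin n) (Fin n) ℝ) (k : ℕ) :
    (A ^ k).map (algebraMap ℝ ℂ) = (A.map (algebraMap ℝ ℂ)) ^ k := by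
  simpa using map_pow ((algebraMap ℝ ℂ).mapMatrix) A k

lemma quad_pow {n : ℕ} (F Qw : Matrix (Fin n) (Fin n) ℝ) {v : Fin n → ℂ} {z : ℂ}
    (hv : ((F.map (algebraMap ℝ ℂ))ᵀ).mulVec v = z • v) (i : ℕ) :
    star v ⬝ᵥ (((F ^ i * Qw * Fᵀ ^ i).map (algebraMap ℝ ℂ)).mulVec v)
      = ((Complex.normSq z ^ i : ℝ) : ℂ) * (star v ⬝ᵥ ((Qw.map (algebraMap ℝ ℂ)).mulVec v)) := by
  set M := F.map (algebraMap ℝ ℂ) with hM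
  have hiter : ∀ k : ℕ, (Mᵀ ^ k).mulVec v = z ^ k • v := by
    intro k
    induction k with
    | zero => simp
    | succ k ih =>
      rw [pow_succ, ← Matrix.mulVec_mulVec, hv, Matrix.mulVec_smul, ih, smul_smul, pow_succ]
      ring_nf
  have htp : Mᵀ ^ i = (Fᵀ ^ i).map (algebraMap ℝ ℂ) := by
    rw [map_pow', hM, Matrix.transpose_map]
  have hmap : (F ^ i * Qw * Fᵀ ^ i).map (algebraMap ℝ ℂ)
      = M ^ i * Qw.map (algebraMap ℝ ℂ) * (M ^ i)ᵀ := by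
    rw [Matrix.map_mul, Matrix.map_mul, map_pow', map_pow', hM, Matrix.transpose_pow,
      Matrix.transpose_map]
  rw [hmap]
  rw [← Matrix.mulVec_mulVec, ← Matrix.mulVec_mulVec, Matrix.transpose_pow, hiter,
    Matrix.dotProduct_mulVec, ← Matrix.mulVec_transpose, Matrix.transpose_pow]
  have hstar : (Mᵀ ^ i).mulVec (star v) = star ((Mᵀ ^ i).mulVec v) := by
    rw [htp, real_map_mulVec_star]
  rw [hstar, hiter, star_smul, smul_dotProduct, Matrix.mulVec_smul,
    dotProduct_smul, smul_smul, smul_eq_mul]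
  congr 1
  rw [star_pow, ← mul_pow]
  simp [Complex.normSq_eq_conj_mul_self]

lemma posSemidef_smul' {n : ℕ} {A : Matrix (Fin n) (Fin n) ℝ} (hA : A.PosSemidef)
    {r : ℝ} (hr : 0 ≤ r) : (r • A).PosSemidef := by
  refine Matrix.PosSemidef.of_dotProduct_mulVec_nonneg ?_ ?_
  · unfold Matrix.IsHermitian
    rw [Matrix.conjTranspose_smul, hA.1.eq]
    simp
  · intro x
    rw [Matrix.smul_mulVec, dotProduct_smul, smul_eq_mul]
    exact mul_nonneg hr (hA.dotProduct_mulVec_nonneg x)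

/-- If `√p · ρ(F) ≥ 1` (some complex eigenvalue `z` of `F` satisfies
`√p · |z| ≥ 1`), `0 < p < 1` and `Q_ω` is symmetric positive definite, then for any
positive semidefinite initial matrix `Σ₀` the sequence `Σ_k = p F Σ_{k-1} F′ + p Q_ω`
does not converge; in particular the traces of the partial sums
`∑_{i=1}^k p^i F^{i-1} Q_ω (F′)^{i-1}` tend to infinity. -/
theorem covariance_recursion_diverges {n : ℕ}
    (F Qw : Matrix (Fin n) (Fin n) ℝ) (p : ℝ)
    (hp0 : 0 < p) (hp1 : p < 1)
    (hQw : Qw.PosDef)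
    (hspec : ∃ z ∈ spectrum ℂ (F.map (algebraMap ℝ ℂ)), 1 ≤ Real.sqrt p * ‖z‖) :
    (∀ S0 : Matrix (Fin n) (Fin n) ℝ, S0.PosSemidef →
      ∀ Sg : ℕ → Matrix (Fin n) (Fin n) ℝ, Sg 0 = S0 →
        (∀ k : ℕ, Sg (k + 1) = p • (F * Sg k * Fᵀ) + p • Qw) →
        ∀ L : Matrix (Fin n) (Fin n) ℝ, ¬ Tendsto Sg atTop (𝓝 L)) ∧
    Tendsto
      (fun k : ℕ =>
        (∑ i ∈ Finset.Icc 1 k, p ^ i • (F ^ (i - 1) * Qw * Fᵀ ^ (i - 1))).trace)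
      atTop atTop := by
  obtain ⟨z, hz, hzabs⟩ := hspec
  obtain ⟨v, hv0, hv⟩ := exists_eigen _ hz
  set T : ℕ → Matrix (Fin n) (Fin n) ℝ :=
    fun k => ∑ i ∈ Finset.Icc 1 k, p ^ i • (F ^ (i - 1) * Qw * Fᵀ ^ (i - 1)) with hT
  set a : Fin n → ℝ := fun i => (v i).re with ha
  set b : Fin n → ℝ := fun i => (v i).im with hb
  have hab : ∃ i, a i ≠ 0 ∨ b i ≠ 0 := by
    by_contra h
    push_neg at h
    apply hv0
    funext i
    obtain ⟨h1, h2⟩ := h i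
    exact Complex.ext h1 h2
  set N : ℝ := a ⬝ᵥ a + b ⬝ᵥ b with hNdef
  have hN : 0 < N := by
    obtain ⟨i0, hi0⟩ := hab
    rw [hNdef]
    simp only [dotProduct]
    rw [← Finset.sum_add_distrib]
    refine Finset.sum_pos' (fun i _ => add_nonneg (mul_self_nonneg _) (mul_self_nonneg _)) ⟨i0, Finset.mem_univ _, ?_⟩
    rcases hi0 with h | h
    · nlinarith [mul_self_nonneg (b i0), mul_self_pos.mpr h]
    · nlinarith [mul_self_nonneg (a i0), mul_self_pos.mpr h]
  set c : ℝ := a ⬝ᵥ Qw.mulVec a + b ⬝ᵥ Qw.mulVec b with hcdef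
  have hstar_real : ∀ x : Fin n → ℝ, star x = x := fun x => funext fun i => rfl
  have hc : 0 < c := by
    have hA : a = 0 → b ≠ 0 := by
      intro h0
      obtain ⟨i0, hi0⟩ := hab
      rcases hi0 with h | h
      · exact absurd (congrFun h0 i0) h
      · intro hb0; exact h (congrFun hb0 i0)
    rw [hcdef]
    by_cases h0 : a = 0
    · have h1 := hQw.dotProduct_mulVec_pos (hA h0)
      have h2 := hQw.posSemidef.dotProduct_mulVec_nonneg a
      rw [hstar_real] at h1 h2
      linarith
    · have h1 := hQw.dotProduct_mulVec_pos h0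
      have h2 := hQw.posSemidef.dotProduct_mulVec_nonneg b
      rw [hstar_real] at h1 h2
      linarith
  have hQj : ∀ j : ℕ, (F ^ j * Qw * Fᵀ ^ j).PosSemidef := by
    intro j
    have := hQw.posSemidef.mul_mul_conjTranspose_same (F ^ j)
    simpa [Matrix.conjTranspose_eq_transpose_of_trivial, Matrix.transpose_pow] using this
  have hre : ∀ j : ℕ, a ⬝ᵥ (F ^ j * Qw * Fᵀ ^ j).mulVec a + b ⬝ᵥ (F ^ j * Qw * Fᵀ ^ j).mulVec b
      = Complex.normSq z ^ j * c := by
    intro j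
    have h1 := re_quad (F ^ j * Qw * Fᵀ ^ j) v
    have h3 := re_quad Qw v
    rw [quad_pow F Qw hv j, Complex.re_ofReal_mul, h3] at h1
    rw [← h1, hcdef]
  -- trace lower bound for each conjugated matrix
  have htrQ : ∀ j : ℕ, Complex.normSq z ^ j * (c / N) ≤ (F ^ j * Qw * Fᵀ ^ j).trace := by
    intro j
    have h1 := quad_le_trace (hQj j) a
    have h2 := quad_le_trace (hQj j) b
    have h3 : Complex.normSq z ^ j * c ≤ (F ^ j * Qw * Fᵀ ^ j).trace * N := by
      rw [← hre j, hNdef]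
      linarith [h1, h2, mul_add ((F ^ j * Qw * Fᵀ ^ j).trace) (a ⬝ᵥ a) (b ⬝ᵥ b)]
    calc Complex.normSq z ^ j * (c / N) = (Complex.normSq z ^ j * c) / N := by ring
      _ ≤ (F ^ j * Qw * Fᵀ ^ j).trace := (div_le_iff₀ hN).mpr h3
  -- p * normSq z ≥ 1
  have hpz : 1 ≤ p * Complex.normSq z := by
    have h1 : (1:ℝ) ≤ (Real.sqrt p * ‖z‖) ^ 2 := by nlinarith
    calc (1:ℝ) ≤ (Real.sqrt p * ‖z‖) ^ 2 := h1
      _ = (Real.sqrt p) ^ 2 * (‖z‖) ^ 2 := by ring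
      _ = p * Complex.normSq z := by rw [Real.sq_sqrt hp0.le, Complex.sq_norm, Complex.normSq_eq_norm_sq]
  set C : ℝ := p * (c / N) with hCdef
  have hC : 0 < C := by positivity
  -- trace lower bound of the partial sums
  have hTtr : ∀ k : ℕ, (k : ℝ) * C ≤ (T k).trace := by
    intro k
    have h1 : (T k).trace = ∑ i ∈ Finset.Icc 1 k, p ^ i * (F ^ (i-1) * Qw * Fᵀ ^ (i-1)).trace := by
      rw [hT]
      rw [Matrix.trace_sum]
      exact Finset.sum_congr rfl fun i _ => by rw [Matrix.trace_smul]; rfl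
    rw [h1]
    have h2 : ∀ i ∈ Finset.Icc 1 k, C ≤ p ^ i * (F ^ (i-1) * Qw * Fᵀ ^ (i-1)).trace := by
      intro i hi
      obtain ⟨hi1, _⟩ := Finset.mem_Icc.mp hi
      obtain ⟨j, rfl⟩ : ∃ j, i = j + 1 := ⟨i - 1, by omega⟩
      have hji : (j + 1) - 1 = j := rfl
      rw [hji]
      have h3 := htrQ j
      have hppos : (0:ℝ) < p ^ (j+1) := pow_pos hp0 _
      calc C ≤ p ^ (j+1) * (Complex.normSq z ^ j * (c / N)) := by
              rw [hCdef]
              have : p ^ (j+1) * (Complex.normSq z ^ j * (c / N))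
                  = (p * Complex.normSq z) ^ j * (p * (c / N)) := by ring
              rw [this]
              nlinarith [one_le_pow₀ hpz (n := j), div_pos hc hN]
        _ ≤ p ^ (j+1) * (F ^ j * Qw * Fᵀ ^ j).trace := by
              exact mul_le_mul_of_nonneg_left h3 hppos.le
    calc (k:ℝ) * C = (Finset.Icc 1 k).card * C := by
          rw [Nat.card_Icc]; norm_num
      _ = ∑ _i ∈ Finset.Icc 1 k, C := by rw [Finset.sum_const, nsmul_eq_mul]
      _ ≤ _ := Finset.sum_le_sum h2
  have htend : Tendsto (fun k : ℕ => (T k).trace) atTop atTop :=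
    tendsto_atTop_mono hTtr (Tendsto.atTop_mul_const hC tendsto_natCast_atTop_atTop)
  -- recursion for T
  have hsum1 : ∀ k : ℕ, T (k+1) = T k + p ^ (k+1) • (F ^ k * Qw * Fᵀ ^ k) := by
    intro k
    simp only [hT]
    rw [Finset.sum_Icc_succ_top (by omega : 1 ≤ k + 1)]
    norm_num
  have hTrec : ∀ k : ℕ, T (k+1) = p • (F * T k * Fᵀ) + p • Qw := by
    intro k
    induction k with
    | zero =>
      rw [hsum1 0]
      rw [hT]
      simp
    | succ k ih =>
      have h4 : p • (F * (p ^ (k+1) • (F ^ k * Qw * Fᵀ ^ k)) * Fᵀ)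
          = p ^ (k+2) • (F ^ (k+1) * Qw * Fᵀ ^ (k+1)) := by
        rw [Matrix.mul_smul, Matrix.smul_mul, smul_smul]
        congr 1
        · ring
        · rw [pow_succ' F, pow_succ Fᵀ]
          noncomm_ring
      rw [hsum1 k, Matrix.mul_add, Matrix.add_mul, smul_add, h4, hsum1 (k+1), ih]
      abel
  constructor
  · intro S0 hS0 Sg hSg0 hSgrec L hL
    have hdiff : ∀ k, (Sg k - T k).PosSemidef := by
      intro k
      induction k with
      | zero =>
        rw [hSg0, hT]
        simpa using hS0
      | succ k ih =>
        have heq : Sg (k+1) - T (k+1) = p • (F * (Sg k - T k) * Fᵀ) := by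
          rw [hSgrec k, hTrec k]
          rw [Matrix.mul_sub, Matrix.sub_mul, smul_sub]
          abel
        rw [heq]
        have h5 := ih.mul_mul_conjTranspose_same F
        rw [Matrix.conjTranspose_eq_transpose_of_trivial] at h5
        exact posSemidef_smul' h5 hp0.le
    have htrge : ∀ k, (T k).trace ≤ (Sg k).trace := by
      intro k
      have h6 := trace_nonneg_of_posSemidef (hdiff k)
      rw [Matrix.trace_sub] at h6
      linarith
    have hSgtend : Tendsto (fun k => (Sg k).trace) atTop atTop :=
      tendsto_atTop_mono htrge htend
    have hcont : Continuous fun A : Matrix (Fin n) (Fin n) ℝ => A.trace :=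
      continuous_id.matrix_trace
    have hLl : Tendsto (fun k => (Sg k).trace) atTop (𝓝 L.trace) :=
      (hcont.tendsto L).comp hL
    exact (hSgtend.not_tendsto (disjoint_nhds_atTop L.trace).symm) hLl
  · exact htend
end

section
/- Let A be n×n, B n×m, K m×n, R̃ a symmetric positive definite m×m matrix, C a q×n matrix with Q = C′C, and suppose the pair (A, C) is observable, i.e. the only vector v ∈ ℝ^n with C A^j v = 0 for all j = 0,…,n−1 is v = 0. If there exists a symmetric positive semi-definite matrix Z satisfying Z = K′R̃K + (A − BK)′ Z (A − BK) + Q, then every solution of the linear recursion β_{k+1} = (A − BK) β_k converges to 0; equivalently, the spectral radius of A − BK is strictly less than 1. -/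
open Matrix Filter Topology
open scoped ComplexOrder MatrixOrder

section LyapAux

variable {a b : ℕ}

private lemma mapT (M : Matrix (Fin a) (Fin b) ℝ) :
    (Mᵀ).map (algebraMap ℝ ℂ) = (M.map (algebraMap ℝ ℂ))ᴴ := by
  ext i j
  simp [conjTranspose_apply, Complex.conj_ofReal]

private lemma quad_conj {l k : Type*} [Fintype l] [Fintype k] {R : Type*} [CommRing R]
    [StarRing R] (M : Matrix l l R) (P : Matrix l k R) (x : k → R) :
    star x ⬝ᵥ ((Pᴴ * M * P) *ᵥ x) = star (P *ᵥ x) ⬝ᵥ (M *ᵥ (P *ᵥ x)) := by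
  simp [star_mulVec, dotProduct_mulVec, vecMul_vecMul, Matrix.mul_assoc]

private lemma quad_self {l k : Type*} [Fintype l] [Fintype k] {R : Type*} [CommRing R]
    [StarRing R] (P : Matrix l k R) (x : k → R) :
    star x ⬝ᵥ ((Pᴴ * P) *ᵥ x) = star (P *ᵥ x) ⬝ᵥ (P *ᵥ x) := by
  simp [star_mulVec, dotProduct_mulVec, vecMul_vecMul]

private lemma quadR (M : Matrix (Fin a) (Fin a) ℝ) (P : Matrix (Fin a) (Fin b) ℝ)
    (x : Fin b → ℝ) :
    x ⬝ᵥ ((Pᵀ * M * P) *ᵥ x) = (P *ᵥ x) ⬝ᵥ (M *ᵥ (P *ᵥ x)) := by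
  have h := quad_conj M P x
  simp only [star_trivial, conjTranspose_eq_transpose_of_trivial] at h
  exact h

private lemma quadRself (P : Matrix (Fin a) (Fin b) ℝ) (x : Fin b → ℝ) :
    x ⬝ᵥ ((Pᵀ * P) *ᵥ x) = (P *ᵥ x) ⬝ᵥ (P *ᵥ x) := by
  have h := quad_self P x
  simp only [star_trivial, conjTranspose_eq_transpose_of_trivial] at h
  exact h

private lemma psd_map {Z : Matrix (Fin a) (Fin a) ℝ} (hZ : Z.PosSemidef) :
    (Z.map (algebraMap ℝ ℂ)).PosSemidef := by
  obtain ⟨N, hN⟩ : ∃ N, Z = Nᴴ * N := CStarAlgebra.nonneg_iff_eq_star_mul_self.mp hZ.nonneg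
  have h : Z.map (algebraMap ℝ ℂ) = (N.map (algebraMap ℝ ℂ))ᴴ * (N.map (algebraMap ℝ ℂ)) := by
    rw [hN, Matrix.map_mul]
    congr 1
    rw [conjTranspose_eq_transpose_of_trivial, mapT]
  rw [h]
  exact Matrix.posSemidef_conjTranspose_mul_self _

private lemma tendsto_mulVec (M : Matrix (Fin a) (Fin b) ℝ) {f : ℕ → Fin b → ℝ}
    {x0 : Fin b → ℝ} (h : Tendsto f atTop (𝓝 x0)) :
    Tendsto (fun k => M *ᵥ f k) atTop (𝓝 (M *ᵥ x0)) := by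
  have hc : Continuous (fun v : Fin b → ℝ => M *ᵥ v) := by
    have := M.mulVecLin.continuous_of_finiteDimensional
    exact this
  exact (hc.tendsto x0).comp h

private lemma tendsto_of_dotSelf {w : ℕ → Fin a → ℝ}
    (h : Tendsto (fun k => w k ⬝ᵥ w k) atTop (𝓝 0)) : Tendsto w atTop (𝓝 0) := by
  rw [tendsto_pi_nhds]
  intro i
  have hsq : Tendsto (fun k => (w k i) ^ 2) atTop (𝓝 0) := by
    refine squeeze_zero (fun k => sq_nonneg _) (fun k => ?_) h
    have : (w k i) * (w k i) ≤ ∑ j, w k j * w k j :=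
      Finset.single_le_sum (f := fun j => w k j * w k j)
        (fun j _ => mul_self_nonneg _) (Finset.mem_univ i)
    simpa [dotProduct, sq] using this
  have habs : Tendsto (fun k => |w k i|) atTop (𝓝 0) := by
    have h2 := (Real.continuous_sqrt.tendsto 0).comp hsq
    simpa only [Function.comp_def, Real.sqrt_sq_eq_abs, Real.sqrt_zero] using h2
  have hres : Tendsto (fun k => w k i) atTop (𝓝 0) :=
    tendsto_of_tendsto_of_tendsto_of_le_of_le (by simpa using habs.neg) habs
      (fun k => neg_abs_le _) (fun k => le_abs_self _)
  simpa using hres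

private lemma map_mulVec_re_im (M : Matrix (Fin a) (Fin b) ℝ) (v : Fin b → ℂ)
    (h : M.map (algebraMap ℝ ℂ) *ᵥ v = 0) :
    M *ᵥ (fun i => (v i).re) = 0 ∧ M *ᵥ (fun i => (v i).im) = 0 := by
  constructor <;> funext i <;>
  · have h2 := congrFun h i
    simp only [mulVec, dotProduct, map_apply] at h2 ⊢
    have h3 := congrArg Complex.re h2
    have h4 := congrArg Complex.im h2
    simp [Complex.re_sum, Complex.im_sum, Complex.mul_re, Complex.mul_im,
      Complex.coe_algebraMap] at h3 h4
    first
    | simpa using h3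
    | simpa using h4

end LyapAux

/-- Lyapunov-plus-observability argument: if `R̃ > 0`, `Q = C′C`,
the pair `(A, C)` is observable, and some symmetric positive semidefinite `Z`
satisfies `Z = K′R̃K + (A − BK)′Z(A − BK) + Q`, then every solution of
`β_{k+1} = (A − BK)β_k` converges to `0`; equivalently `A − BK` is Schur stable
(all complex eigenvalues have absolute value `< 1`). -/
theorem lyapunov_observability_schur_stable {n m q : ℕ}
    (A : Matrix (Fin n) (Fin n) ℝ) (B : Matrix (Fin n) (Fin m) ℝ)
    (K : Matrix (Fin m) (Fin n) ℝ) (Rt : Matrix (Fin m) (Fin m) ℝ)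
    (C : Matrix (Fin q) (Fin n) ℝ)
    (hR : Rt.PosDef)
    (hobs : ∀ v : Fin n → ℝ, (∀ j : ℕ, j < n → (C * A ^ j) *ᵥ v = 0) → v = 0)
    (Z : Matrix (Fin n) (Fin n) ℝ) (hZ : Z.PosSemidef)
    (hLyap : Z = Kᵀ * Rt * K + (A - B * K)ᵀ * Z * (A - B * K) + Cᵀ * C) :
    (∀ β : ℕ → Fin n → ℝ, (∀ k : ℕ, β (k + 1) = (A - B * K) *ᵥ β k) →
        Tendsto β atTop (𝓝 0)) ∧
    (∀ z ∈ spectrum ℂ ((A - B * K).map (algebraMap ℝ ℂ)), ‖z‖ < 1) := by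
  set F : Matrix (Fin n) (Fin n) ℝ := A - B * K with hF
  have hRdet : IsUnit Rt.det := hR.det_pos.ne'.isUnit
  constructor
  · -- Part 1: convergence
    intro β hβ
    set v : ℕ → ℝ := fun k => β k ⬝ᵥ (Z *ᵥ β k) with hvdef
    set r : ℕ → ℝ := fun k => (K *ᵥ β k) ⬝ᵥ (Rt *ᵥ (K *ᵥ β k)) with hrdef
    set c : ℕ → ℝ := fun k => (C *ᵥ β k) ⬝ᵥ (C *ᵥ β k) with hcdef
    have hv0 : ∀ k, 0 ≤ v k := fun k => by
      simpa only [star_trivial] using hZ.dotProduct_mulVec_nonneg (β k)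
    have hr0 : ∀ k, 0 ≤ r k := fun k => by
      simpa only [star_trivial] using hR.posSemidef.dotProduct_mulVec_nonneg (K *ᵥ β k)
    have hc0 : ∀ k, 0 ≤ c k := fun k => by
      simpa only [star_trivial] using dotProduct_star_self_nonneg (C *ᵥ β k)
    have key : ∀ k, v k = r k + v (k + 1) + c k := by
      intro k
      have h1 : v (k + 1) = β k ⬝ᵥ ((Fᵀ * Z * F) *ᵥ β k) := by
        rw [hvdef]
        simp only [hβ k]
        exact (quadR Z F (β k)).symm
      calc v k = β k ⬝ᵥ ((Kᵀ * Rt * K + Fᵀ * Z * F + Cᵀ * C) *ᵥ β k) := by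
            rw [hvdef]; simp only [← hLyap]
        _ = r k + v (k + 1) + c k := by
            rw [add_mulVec, add_mulVec, dotProduct_add, dotProduct_add,
              quadR Rt K (β k), quadRself C (β k), h1]
    have hmono : Antitone v := antitone_nat_of_succ_le fun k => by
      have := key k; have := hr0 k; have := hc0 k; linarith
    have hbdd : BddBelow (Set.range v) := ⟨0, fun x ⟨k, hk⟩ => hk ▸ hv0 k⟩
    have hvlim : Tendsto v atTop (𝓝 (⨅ k, v k)) := tendsto_atTop_ciInf hmono hbdd
    have hrc : Tendsto (fun k => r k + c k) atTop (𝓝 0) := by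
      have hshift : Tendsto (fun k => v (k + 1)) atTop (𝓝 (⨅ k, v k)) :=
        hvlim.comp (tendsto_add_atTop_nat 1)
      have hdiff := hvlim.sub hshift
      rw [sub_self] at hdiff
      have heq : (fun k => r k + c k) = fun k => v k - v (k + 1) :=
        funext fun k => by have := key k; linarith
      rw [heq]; exact hdiff
    have hrlim : Tendsto r atTop (𝓝 0) :=
      squeeze_zero hr0 (fun k => le_add_of_nonneg_right (hc0 k)) hrc
    have hclim : Tendsto c atTop (𝓝 0) :=
      squeeze_zero hc0 (fun k => le_add_of_nonneg_left (hr0 k)) hrc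
    have hCβ : Tendsto (fun k => C *ᵥ β k) atTop (𝓝 0) := tendsto_of_dotSelf hclim
    -- K βₖ → 0
    obtain ⟨N, hN⟩ : ∃ N, Rt = Nᴴ * N := CStarAlgebra.nonneg_iff_eq_star_mul_self.mp hR.posSemidef.nonneg
    have hNK : Tendsto (fun k => N *ᵥ (K *ᵥ β k)) atTop (𝓝 0) := by
      apply tendsto_of_dotSelf
      have heq : (fun k => (N *ᵥ (K *ᵥ β k)) ⬝ᵥ (N *ᵥ (K *ᵥ β k))) = r := by
        funext k
        show (N *ᵥ (K *ᵥ β k)) ⬝ᵥ (N *ᵥ (K *ᵥ β k)) = (K *ᵥ β k) ⬝ᵥ (Rt *ᵥ (K *ᵥ β k))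
        rw [hN, conjTranspose_eq_transpose_of_trivial, quadRself]
      rw [heq]; exact hrlim
    have hRtK : Tendsto (fun k => Rt *ᵥ (K *ᵥ β k)) atTop (𝓝 0) := by
      have h2 := tendsto_mulVec Nᵀ hNK
      have heq : (fun k => Nᵀ *ᵥ (N *ᵥ (K *ᵥ β k))) = fun k => Rt *ᵥ (K *ᵥ β k) := by
        funext k
        rw [mulVec_mulVec, ← conjTranspose_eq_transpose_of_trivial, ← hN]
      rw [heq] at h2
      simpa using h2
    have hKβ : Tendsto (fun k => K *ᵥ β k) atTop (𝓝 0) := by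
      have h2 := tendsto_mulVec Rt⁻¹ hRtK
      have heq : (fun k => Rt⁻¹ *ᵥ (Rt *ᵥ (K *ᵥ β k))) = fun k => K *ᵥ β k := by
        funext k
        rw [mulVec_mulVec, Matrix.nonsing_inv_mul Rt hRdet, one_mulVec]
      rw [heq] at h2
      simpa using h2
    -- C A^j βₖ → 0 for every j
    have hCA : ∀ j : ℕ, Tendsto (fun k => (C * A ^ j) *ᵥ β k) atTop (𝓝 0) := by
      intro j
      induction j with
      | zero => simpa using hCβ
      | succ j ih =>
        have hsplit : ∀ k, (C * A ^ (j + 1)) *ᵥ β k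
            = (C * A ^ j) *ᵥ β (k + 1) + ((C * A ^ j) * B) *ᵥ (K *ᵥ β k) := by
          intro k
          have hmat : C * A ^ (j + 1) = C * A ^ j * F + C * A ^ j * B * K := by
            rw [hF, Matrix.mul_sub, Matrix.mul_assoc (C * A ^ j) B K, sub_add_cancel,
              pow_succ, ← Matrix.mul_assoc C (A ^ j) A]
          rw [hβ k, mulVec_mulVec, mulVec_mulVec, ← add_mulVec, hmat]
        have h1 : Tendsto (fun k => (C * A ^ j) *ᵥ β (k + 1)) atTop (𝓝 0) :=
          ih.comp (tendsto_add_atTop_nat 1)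
        have h2 : Tendsto (fun k => ((C * A ^ j) * B) *ᵥ (K *ᵥ β k)) atTop (𝓝 0) := by
          have := tendsto_mulVec ((C * A ^ j) * B) hKβ
          simpa using this
        have h3 := h1.add h2
        rw [add_zero] at h3
        have heq : (fun k => (C * A ^ (j + 1)) *ᵥ β k)
            = fun k => (C * A ^ j) *ᵥ β (k + 1) + ((C * A ^ j) * B) *ᵥ (K *ᵥ β k) :=
          funext hsplit
        rw [heq]
        exact h3
    -- observability: recover βₖ → 0
    let L : (Fin n → ℝ) →ₗ[ℝ] (Fin n → Fin q → ℝ) :=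
      { toFun := fun x j => (C * A ^ (j : ℕ)) *ᵥ x
        map_add' := fun x y => by funext j; simp [mulVec_add]
        map_smul' := fun t x => by funext j; simp [mulVec_smul] }
    have hLker : LinearMap.ker L = ⊥ := by
      rw [LinearMap.ker_eq_bot']
      intro x hx
      apply hobs
      intro j hj
      have := congrFun hx ⟨j, hj⟩
      simpa [L] using this
    obtain ⟨g, hg⟩ := LinearMap.exists_leftInverse_of_injective L hLker
    have hgL : ∀ x, g (L x) = x := fun x => LinearMap.congr_fun hg x
    have hLβ : Tendsto (fun k => L (β k)) atTop (𝓝 0) := by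
      rw [tendsto_pi_nhds]
      intro j
      simpa [L] using hCA (j : ℕ)
    have hgc : Continuous g := g.continuous_of_finiteDimensional
    have h4 := (hgc.tendsto 0).comp hLβ
    have heq : (g ∘ fun k => L (β k)) = β := funext fun k => hgL (β k)
    rw [heq, map_zero] at h4
    exact h4
  · -- Part 2: Schur stability
    intro z hz
    by_contra hlt
    push_neg at hlt
    -- eigenvector
    rw [spectrum.mem_iff] at hz
    have hdet : (algebraMap ℂ (Matrix (Fin n) (Fin n) ℂ) z - F.map (algebraMap ℝ ℂ)).det = 0 := by
      by_contra hd
      exact hz ((Matrix.isUnit_iff_isUnit_det _).2 (Ne.isUnit hd))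
    obtain ⟨v, hv0, hv⟩ := (Matrix.exists_mulVec_eq_zero_iff).2 hdet
    have hEv : F.map (algebraMap ℝ ℂ) *ᵥ v = z • v := by
      have h1 : (algebraMap ℂ (Matrix (Fin n) (Fin n) ℂ) z) *ᵥ v = z • v := by
        ext i; simp [Matrix.algebraMap_eq_diagonal, mulVec_diagonal]
      rw [sub_mulVec, h1, sub_eq_zero] at hv
      exact hv.symm
    -- complexified Lyapunov equation
    have hZc : Z.map (algebraMap ℝ ℂ) = (K.map (algebraMap ℝ ℂ))ᴴ * Rt.map (algebraMap ℝ ℂ) * K.map (algebraMap ℝ ℂ)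
        + (F.map (algebraMap ℝ ℂ))ᴴ * Z.map (algebraMap ℝ ℂ) * F.map (algebraMap ℝ ℂ) + (C.map (algebraMap ℝ ℂ))ᴴ * C.map (algebraMap ℝ ℂ) := by
      conv_lhs => rw [hLyap]
      simp only [Matrix.map_add (algebraMap ℝ ℂ) (map_add (algebraMap ℝ ℂ)),
        Matrix.map_mul, mapT]
    set w : ℂ := star v ⬝ᵥ (Z.map (algebraMap ℝ ℂ) *ᵥ v) with hwdef
    set rc : ℂ := star (K.map (algebraMap ℝ ℂ) *ᵥ v) ⬝ᵥ (Rt.map (algebraMap ℝ ℂ) *ᵥ (K.map (algebraMap ℝ ℂ) *ᵥ v)) with hrcdef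
    set cc : ℂ := star (C.map (algebraMap ℝ ℂ) *ᵥ v) ⬝ᵥ (C.map (algebraMap ℝ ℂ) *ᵥ v) with hccdef
    have hq : w = rc + (Complex.normSq z : ℂ) * w + cc := by
      conv_lhs => rw [hwdef, hZc]
      rw [add_mulVec, add_mulVec, dotProduct_add, dotProduct_add,
        quad_conj, quad_conj, quad_self, hEv]
      congr 1
      congr 1
      rw [star_smul, mulVec_smul, smul_dotProduct, dotProduct_smul, smul_smul,
        smul_eq_mul, hwdef]
      congr 1
      rw [RCLike.star_def, mul_comm, Complex.mul_conj]
    have hwnn : 0 ≤ w := (psd_map hZ).dotProduct_mulVec_nonneg v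
    have hrnn : 0 ≤ rc := (psd_map hR.posSemidef).dotProduct_mulVec_nonneg (K.map (algebraMap ℝ ℂ) *ᵥ v)
    have hcnn : 0 ≤ cc := dotProduct_star_self_nonneg _
    obtain ⟨hwre, hwim⟩ := Complex.nonneg_iff.mp hwnn
    obtain ⟨hrre, hrim⟩ := Complex.nonneg_iff.mp hrnn
    obtain ⟨hcre, hcim⟩ := Complex.nonneg_iff.mp hcnn
    have hns : 1 ≤ Complex.normSq z := by
      have := Complex.sq_norm z
      nlinarith [norm_nonneg z]
    have hre : w.re = rc.re + Complex.normSq z * w.re + cc.re := by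
      have := congrArg Complex.re hq
      simpa [Complex.add_re, Complex.re_ofReal_mul] using this
    have hrre0 : rc.re = 0 := by nlinarith
    have hcre0 : cc.re = 0 := by nlinarith
    have hrc0 : rc = 0 := Complex.ext hrre0 hrim.symm
    have hcc0 : cc = 0 := Complex.ext hcre0 hcim.symm
    -- C v = 0 and K v = 0
    have hCv : C.map (algebraMap ℝ ℂ) *ᵥ v = 0 := by
      rw [hccdef] at hcc0
      exact dotProduct_star_self_eq_zero.mp hcc0
    have hKv : K.map (algebraMap ℝ ℂ) *ᵥ v = 0 := by
      have hRtv : Rt.map (algebraMap ℝ ℂ) *ᵥ (K.map (algebraMap ℝ ℂ) *ᵥ v) = 0 :=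
        ((psd_map hR.posSemidef).dotProduct_mulVec_zero_iff _).mp (by rw [← hrcdef]; exact hrc0)
      have hU : IsUnit (Rt.map (algebraMap ℝ ℂ)).det := by
        have h5 : (Rt.map (algebraMap ℝ ℂ)).det = algebraMap ℝ ℂ Rt.det := by
          rw [← RingHom.mapMatrix_apply, ← RingHom.map_det]
        rw [h5]
        exact isUnit_iff_ne_zero.mpr (by simpa using hR.det_pos.ne')
      have hinj := Matrix.mulVec_injective_iff_isUnit.mpr ((Matrix.isUnit_iff_isUnit_det _).mpr hU)
      apply hinj
      rw [hRtv, mulVec_zero]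
    -- A v = z v
    have hAv : A.map (algebraMap ℝ ℂ) *ᵥ v = z • v := by
      have hFm : F.map (algebraMap ℝ ℂ) = A.map (algebraMap ℝ ℂ) - (B.map (algebraMap ℝ ℂ)) * (K.map (algebraMap ℝ ℂ)) := by
        rw [hF, Matrix.map_sub (algebraMap ℝ ℂ) (map_sub (algebraMap ℝ ℂ)), Matrix.map_mul]
      rw [hFm, sub_mulVec, ← mulVec_mulVec, hKv, mulVec_zero, sub_zero] at hEv
      exact hEv
    have hAj : ∀ j : ℕ, (A.map (algebraMap ℝ ℂ)) ^ j *ᵥ v = z ^ j • v := by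
      intro j
      induction j with
      | zero => simp
      | succ j ih =>
        rw [pow_succ, ← mulVec_mulVec, hAv, mulVec_smul, ih, smul_smul, pow_succ]
        rw [mul_comm]
    have hCAj : ∀ j : ℕ, (C * A ^ j).map (algebraMap ℝ ℂ) *ᵥ v = 0 := by
      intro j
      rw [Matrix.map_mul, ← mulVec_mulVec]
      have : (A ^ j).map (algebraMap ℝ ℂ) = (A.map (algebraMap ℝ ℂ)) ^ j := map_pow (algebraMap ℝ ℂ).mapMatrix A j
      rw [this, hAj j, mulVec_smul, hCv, smul_zero]
    -- conclude v = 0, contradiction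
    apply hv0
    have hobsj : ∀ j : ℕ, j < n → (C * A ^ j) *ᵥ (fun i => (v i).re) = 0
        ∧ (C * A ^ j) *ᵥ (fun i => (v i).im) = 0 :=
      fun j _ => map_mulVec_re_im (C * A ^ j) v (hCAj j)
    have hre0 : (fun i => (v i).re) = 0 := hobs _ (fun j hj => (hobsj j hj).1)
    have him0 : (fun i => (v i).im) = 0 := hobs _ (fun j hj => (hobsj j hj).2)
    funext i
    exact Complex.ext (congrFun hre0 i) (congrFun him0 i)
end
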